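/- arXiv:2201.13372 — 4 statements merged into one kernel-verified Lean document; each statement's English description precedes it below -/
import Mathlib

section
/- Let X be a real random variable with mean μ and centered (1+γ)-moment E|X − μ|^{1+γ} = M < ∞ for γ ∈ (0,1], and write X̄ = X − μ. For ε ∈ (0,2/5], if Q_ε denotes an ε-quantile of X̄, then E[X̄² · 1{Q_{2ε}(X̄) ≤ X̄ ≤ Q_{1−ε/2}(X̄)}] ≤ 2ε (2M/ε)^{2/(1+γ)}, and E[Q_{1−ε/2}(X̄)² · 1{X̄ ≥ Q_{1−ε/2}(X̄)}] ≤ 2ε (2M/ε)^{2/(1+γ)}. -/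
open MeasureTheory

/-- Quantile-clipped second moment bounds for the trimmed-mean analysis: if `X̄ = X − E X` has
centered `(1+γ)`-moment `M`, and `q1`, `q2` are the `2ε`- and `(1−ε/2)`-quantiles of `X̄`
(in the sense `P(X̄ ≤ q1) = 2ε` and `P(X̄ ≥ q2) = ε/2`), with `ε ∈ (0, 2/5]`, then
`E[X̄² 1{q1 ≤ X̄ ≤ q2}] ≤ 2ε (2M/ε)^{2/(1+γ)}` and
`E[q2² 1{X̄ ≥ q2}] ≤ 2ε (2M/ε)^{2/(1+γ)}`. -/
theorem quantile_clipped_second_moment {Ω : Type*} [MeasurableSpace Ω] (μ : Measure Ω)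
    [IsProbabilityMeasure μ] (X : Ω → ℝ) (hX : Measurable X) (hint : Integrable X μ)
    (γ M : ℝ) (hγ : γ ∈ Set.Ioc (0 : ℝ) 1)
    (hmom : Integrable (fun ω => |X ω - ∫ ω', X ω' ∂μ| ^ (1 + γ)) μ)
    (hM : ∫ ω, |X ω - ∫ ω', X ω' ∂μ| ^ (1 + γ) ∂μ = M)
    (ε q1 q2 : ℝ) (hε : ε ∈ Set.Ioc (0 : ℝ) (2 / 5))
    (hq1 : (μ {ω | X ω - ∫ ω', X ω' ∂μ ≤ q1}).toReal = 2 * ε)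
    (hq2 : (μ {ω | q2 ≤ X ω - ∫ ω', X ω' ∂μ}).toReal = ε / 2) :
    (∫ ω in {ω | q1 ≤ X ω - ∫ ω', X ω' ∂μ ∧ X ω - ∫ ω', X ω' ∂μ ≤ q2},
        (X ω - ∫ ω', X ω' ∂μ) ^ 2 ∂μ) ≤ 2 * ε * (2 * M / ε) ^ (2 / (1 + γ)) ∧
    q2 ^ 2 * (μ {ω | q2 ≤ X ω - ∫ ω', X ω' ∂μ}).toReal
      ≤ 2 * ε * (2 * M / ε) ^ (2 / (1 + γ)) := by
  obtain ⟨hγ0, hγ1⟩ := hγ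
  obtain ⟨hε0, hε1⟩ := hε
  set m := ∫ ω', X ω' ∂μ with hm
  have hYmeas : Measurable fun ω => X ω - m := hX.sub measurable_const
  have h1γ : (0 : ℝ) < 1 + γ := by linarith
  have hM0 : 0 ≤ M := by
    rw [← hM]
    exact integral_nonneg fun ω => Real.rpow_nonneg (abs_nonneg _) _
  -- Markov-type inequality
  have markov : ∀ t : ℝ, 0 < t → ∀ s : Set Ω, MeasurableSet s →
      (∀ ω ∈ s, t ≤ |X ω - m|) → (μ s).toReal * t ^ (1 + γ) ≤ M := by
    intro t ht s hs hsub
    have h1 : (μ s).toReal * t ^ (1 + γ) = ∫ _ω in s, t ^ (1 + γ) ∂μ := by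
      rw [setIntegral_const, smul_eq_mul]; rfl
    rw [h1, ← hM]
    have h2 : ∫ ω in s, t ^ (1 + γ) ∂μ ≤ ∫ ω in s, |X ω - m| ^ (1 + γ) ∂μ := by
      refine setIntegral_mono_on
        ((integrableOn_const_iff).mpr (Or.inr (measure_lt_top μ s))) hmom.integrableOn hs ?_
      intro ω hω
      exact Real.rpow_le_rpow ht.le (hsub ω hω) h1γ.le
    have h3 : ∫ ω in s, |X ω - m| ^ (1 + γ) ∂μ ≤ ∫ ω, |X ω - m| ^ (1 + γ) ∂μ :=
      setIntegral_le_integral hmom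
        (Filter.Eventually.of_forall fun ω => Real.rpow_nonneg (abs_nonneg _) _)
    linarith
  -- M is strictly positive
  have hMpos : 0 < M := by
    rcases lt_or_eq_of_le hM0 with h | h
    · exact h
    have hzero : ∫ ω, |X ω - m| ^ (1 + γ) ∂μ = 0 := by rw [hM, ← h]
    have hae : ∀ᵐ ω ∂μ, |X ω - m| ^ (1 + γ) = 0 := by
      have := (integral_eq_zero_iff_of_nonneg
        (fun ω => Real.rpow_nonneg (abs_nonneg _) _) hmom).mp hzero
      filter_upwards [this] with ω hω using hω
    have haeY : ∀ᵐ ω ∂μ, X ω - m = 0 := by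
      filter_upwards [hae] with ω hω
      have : |X ω - m| = 0 := by
        by_contra hne
        have habs : 0 < |X ω - m| := lt_of_le_of_ne (abs_nonneg _) (Ne.symm hne)
        have := Real.rpow_pos_of_pos habs (1 + γ)
        linarith
      exact abs_eq_zero.mp this
    have hmeasq2 : MeasurableSet {ω | q2 ≤ X ω - m} := measurableSet_le measurable_const hYmeas
    rcases le_or_gt q2 0 with hq2sgn | hq2sgn
    · -- then the set {q2 ≤ X̄} has measure ≥ μ{X̄ = 0} = 1
      have hnull : μ {ω | ¬ (X ω - m = 0)} = 0 := by
        rw [← MeasureTheory.ae_iff]; exact haeY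
      have hone : (1 : ENNReal) ≤ μ {ω | q2 ≤ X ω - m} := by
        have hsub2 : {ω | X ω - m = 0} ⊆ {ω | q2 ≤ X ω - m} := by
          intro ω hω; simp only [Set.mem_setOf_eq] at hω ⊢; rw [hω]; exact hq2sgn
        calc (1 : ENNReal) = μ Set.univ := (measure_univ).symm
          _ ≤ μ {ω | X ω - m = 0} + μ {ω | ¬ (X ω - m = 0)} := by
              refine le_trans (measure_mono ?_) (measure_union_le _ _)
              intro ω _; by_cases h : X ω - m = 0
              · exact Or.inl h
              · exact Or.inr h
          _ = μ {ω | X ω - m = 0} := by rw [hnull, add_zero]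
          _ ≤ μ {ω | q2 ≤ X ω - m} := measure_mono hsub2
      have : (1 : ℝ) ≤ (μ {ω | q2 ≤ X ω - m}).toReal := by
        have := ENNReal.toReal_mono (measure_ne_top μ _) hone
        simpa using this
      rw [hq2] at this; linarith
    · -- then the set {q2 ≤ X̄} is contained in {X̄ ≠ 0}, hence null
      have hnull : μ {ω | q2 ≤ X ω - m} = 0 := by
        refine measure_mono_null ?_ (by rw [← MeasureTheory.ae_iff]; exact haeY)
        intro ω hω
        simp only [Set.mem_setOf_eq] at hω ⊢
        intro h0; rw [h0] at hω; linarith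
      rw [hnull] at hq2; simp only [ENNReal.toReal_zero] at hq2; linarith
  -- the bound B
  have hb : (0 : ℝ) < 2 * M / ε := by positivity
  set B : ℝ := (2 * M / ε) ^ (1 / (1 + γ)) with hBdef
  have hBpos : 0 < B := Real.rpow_pos_of_pos hb _
  have hB1γ : B ^ (1 + γ) = 2 * M / ε := by
    rw [hBdef, ← Real.rpow_mul hb.le, one_div_mul_cancel h1γ.ne', Real.rpow_one]
  -- quantile bounds
  have hmeasq2 : MeasurableSet {ω | q2 ≤ X ω - m} := measurableSet_le measurable_const hYmeas
  have hmeasq1 : MeasurableSet {ω | X ω - m ≤ q1} := measurableSet_le hYmeas measurable_const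
  have hc : ε * (2 * M / ε) = 2 * M := by field_simp
  have hq2le : q2 ≤ B := by
    by_contra hcon
    push_neg at hcon
    have ht : 0 < q2 := hBpos.trans hcon
    have hmk := markov q2 ht _ hmeasq2 fun ω hω => le_trans hω (le_abs_self _)
    rw [hq2] at hmk
    have hgt : 2 * M / ε < q2 ^ (1 + γ) := by
      rw [← hB1γ]
      exact Real.rpow_lt_rpow hBpos.le hcon h1γ
    nlinarith [hmk, hgt, hc, hε0, hMpos]
  have hq2ge : -B ≤ q2 := by
    by_contra hcon
    push_neg at hcon
    have ht : 0 < -q2 := by linarith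
    have hBlt : B < -q2 := by linarith
    have hcompl : μ {ω | X ω - m < q2} = 1 - μ {ω | q2 ≤ X ω - m} := by
      rw [← prob_compl_eq_one_sub hmeasq2]
      congr 1
      ext ω
      simp [not_le]
    have htr : (μ {ω | X ω - m < q2}).toReal = 1 - ε / 2 := by
      rw [hcompl, ENNReal.toReal_sub_of_le prob_le_one ENNReal.one_ne_top,
        ENNReal.toReal_one, hq2]
    have hmk := markov (-q2) ht {ω | X ω - m < q2} (measurableSet_lt hYmeas measurable_const)
      (fun ω hω => by
        simp only [Set.mem_setOf_eq] at hω
        rw [abs_sub_comm]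
        calc -q2 ≤ -(X ω - m) := by linarith
          _ ≤ |m - X ω| := by rw [neg_sub]; exact le_abs_self _)
    rw [htr] at hmk
    have hgt : 2 * M / ε < (-q2) ^ (1 + γ) := by
      rw [← hB1γ]
      exact Real.rpow_lt_rpow hBpos.le hBlt h1γ
    have h5M : 5 * M ≤ 2 * M / ε := by
      rw [le_div_iff₀ hε0]; nlinarith
    nlinarith [hmk, hgt, hc, hε0, hMpos, h5M,
      mul_lt_mul_of_pos_left hgt (show (0:ℝ) < 1 - ε / 2 by linarith)]
  have hq1ge : -B ≤ q1 := by
    by_contra hcon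
    push_neg at hcon
    have ht : 0 < -q1 := by linarith
    have hBlt : B < -q1 := by linarith
    have hmk := markov (-q1) ht _ hmeasq1
      (fun ω hω => by
        simp only [Set.mem_setOf_eq] at hω
        rw [abs_sub_comm]
        calc -q1 ≤ -(X ω - m) := by linarith
          _ ≤ |m - X ω| := by rw [neg_sub]; exact le_abs_self _)
    rw [hq1] at hmk
    have hgt : 2 * M / ε < (-q1) ^ (1 + γ) := by
      rw [← hB1γ]
      exact Real.rpow_lt_rpow hBpos.le hBlt h1γ
    nlinarith [hmk, hgt, hc, hε0, hMpos,
      mul_lt_mul_of_pos_left hgt (show (0:ℝ) < 2 * ε by linarith)]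
  -- rewrite the RHS
  have hB2 : (2 * M / ε) ^ (2 / (1 + γ)) = B ^ 2 := by
    rw [show (2 : ℝ) / (1 + γ) = 1 / (1 + γ) * 2 by ring, Real.rpow_mul hb.le, hBdef,
      Real.rpow_two]
  have hBsplit : B ^ 2 = (2 * M / ε) * B ^ (1 - γ) := by
    have h2 : (B : ℝ) ^ (2 : ℕ) = B ^ ((1 + γ) + (1 - γ) : ℝ) := by
      rw [show (1 + γ) + (1 - γ) = (2 : ℝ) by ring, Real.rpow_two]
    rw [h2, Real.rpow_add hBpos, hB1γ]
  have hB1g_pos : 0 < B ^ (1 - γ) := Real.rpow_pos_of_pos hBpos _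
  clear_value B
  clear hBdef
  -- pointwise bound
  have key : ∀ a : ℝ, |a| ≤ B → a ^ 2 ≤ |a| ^ (1 + γ) * B ^ (1 - γ) := by
    intro a ha
    have h2 : a ^ 2 = |a| ^ ((1 + γ) + (1 - γ) : ℝ) := by
      rw [show (1 + γ) + (1 - γ) = (2 : ℝ) by ring, Real.rpow_two, sq_abs]
    rw [h2, Real.rpow_add' (abs_nonneg a) (by intro h; linarith)]
    exact mul_le_mul_of_nonneg_left
      (Real.rpow_le_rpow (abs_nonneg a) ha (by linarith))
      (Real.rpow_nonneg (abs_nonneg a) _)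
  constructor
  · -- first bound
    set S : Set Ω := {ω | q1 ≤ X ω - m ∧ X ω - m ≤ q2} with hSdef
    have hS : MeasurableSet S :=
      (measurableSet_le measurable_const hYmeas).inter (measurableSet_le hYmeas measurable_const)
    have habsS : ∀ ω ∈ S, |X ω - m| ≤ B := by
      intro ω hω
      obtain ⟨h1, h2⟩ := hω
      rw [abs_le]
      constructor <;> linarith
    have hIntSq : IntegrableOn (fun ω => (X ω - m) ^ 2) S μ := by
      refine Integrable.mono' (integrable_const (B ^ 2))
        ((hYmeas.pow_const 2).aestronglyMeasurable.restrict) ?_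
      rw [ae_restrict_iff' hS]
      filter_upwards with ω hω
      rw [Real.norm_eq_abs, abs_of_nonneg (sq_nonneg _)]
      have := habsS ω hω
      nlinarith [abs_nonneg (X ω - m), sq_abs (X ω - m)]
    calc ∫ ω in S, (X ω - m) ^ 2 ∂μ
        ≤ ∫ ω in S, |X ω - m| ^ (1 + γ) * B ^ (1 - γ) ∂μ := by
          refine setIntegral_mono_on hIntSq ((hmom.mul_const _).integrableOn) hS ?_
          intro ω hω
          exact key _ (habsS ω hω)
      _ = (∫ ω in S, |X ω - m| ^ (1 + γ) ∂μ) * B ^ (1 - γ) := integral_mul_const _ _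
      _ ≤ M * B ^ (1 - γ) := by
          refine mul_le_mul_of_nonneg_right ?_ hB1g_pos.le
          rw [← hM]
          exact setIntegral_le_integral hmom
            (Filter.Eventually.of_forall fun ω => Real.rpow_nonneg (abs_nonneg _) _)
      _ ≤ 2 * ε * (2 * M / ε) ^ (2 / (1 + γ)) := by
          rw [hB2, hBsplit]
          have he : 2 * ε * (2 * M / ε * B ^ (1 - γ)) = 4 * (M * B ^ (1 - γ)) := by
            field_simp
            ring
          rw [he]
          linarith [mul_pos hMpos hB1g_pos]
  · -- second bound
    rw [hq2, hB2]
    have hq2sq : q2 ^ 2 ≤ B ^ 2 := sq_le_sq' (by linarith) hq2le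
    have h1 : q2 ^ 2 * (ε / 2) ≤ B ^ 2 * (ε / 2) :=
      mul_le_mul_of_nonneg_right hq2sq (by linarith)
    have h2 : B ^ 2 * (ε / 2) ≤ 2 * ε * B ^ 2 := by
      rw [mul_comm (2 * ε) (B ^ 2)]
      exact mul_le_mul_of_nonneg_left (by linarith) (sq_nonneg B)
    exact le_trans h1 h2
end

section
/- Let X be a real random variable with mean μ, X̄ = X − μ, and E|X̄|^{1+γ} = M < ∞ with γ ∈ (0,1]. Then for ε ∈ (0,1), E[|X̄ − Q_{ε/2}(X̄)| · 1{X̄ ≤ Q_{ε/2}(X̄)}] ≤ 2 M^{1/(1+γ)} (ε/2)^{γ/(1+γ)}. -/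
open MeasureTheory

/-- Lower-tail clipped first-moment bound for the trimmed-mean analysis: if `X̄ = X − E X` has
centered `(1+γ)`-moment `M < ∞` with `γ ∈ (0,1]`, and `q` is the `ε/2`-quantile of `X̄`
(in the sense `P(X̄ ≤ q) = ε/2`), then for `ε ∈ (0,1)`,
`E[|X̄ − q| 1{X̄ ≤ q}] ≤ 2 M^{1/(1+γ)} (ε/2)^{γ/(1+γ)}`. -/
theorem quantile_clipped_first_moment {Ω : Type*} [MeasurableSpace Ω] (μ : Measure Ω)
    [IsProbabilityMeasure μ] (X : Ω → ℝ) (hX : Measurable X) (hint : Integrable X μ)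
    (γ M : ℝ) (hγ : γ ∈ Set.Ioc (0 : ℝ) 1)
    (hmom : Integrable (fun ω => |X ω - ∫ ω', X ω' ∂μ| ^ (1 + γ)) μ)
    (hM : ∫ ω, |X ω - ∫ ω', X ω' ∂μ| ^ (1 + γ) ∂μ = M)
    (ε q : ℝ) (hε : ε ∈ Set.Ioo (0 : ℝ) 1)
    (hq : (μ {ω | X ω - ∫ ω', X ω' ∂μ ≤ q}).toReal = ε / 2) :
    (∫ ω in {ω | X ω - ∫ ω', X ω' ∂μ ≤ q}, |X ω - ∫ ω', X ω' ∂μ - q| ∂μ)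
      ≤ 2 * M ^ (1 / (1 + γ)) * (ε / 2) ^ (γ / (1 + γ)) := by
  obtain ⟨hγ0, hγ1⟩ := hγ
  obtain ⟨hε0, hε1⟩ := hε
  set c := ∫ ω', X ω' ∂μ with hc
  set Y : Ω → ℝ := fun ω => X ω - c with hYdef
  have hYmeas : Measurable Y := hX.sub measurable_const
  have hYint : Integrable Y μ := hint.sub (integrable_const c)
  set A : Set Ω := {ω | Y ω ≤ q} with hAdef
  have hAmeas : MeasurableSet A := measurableSet_le hYmeas measurable_const
  have h1γ : (0:ℝ) < 1 + γ := by linarith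
  have hεhalf : (0:ℝ) < ε/2 := by linarith
  have hM0 : 0 ≤ M := by
    rw [← hM]; exact integral_nonneg fun ω => Real.rpow_nonneg (abs_nonneg _) _
  have hμA : (μ A).toReal = ε/2 := hq
  -- Markov-type quantile bound : |q| ^ (1+γ) * (ε/2) ≤ M
  have markov : ∀ t : ℝ, t * (μ {ω | t ≤ |Y ω| ^ (1+γ)}).toReal ≤ M := by
    intro t
    rw [← hM]
    exact mul_meas_ge_le_integral_of_nonneg
      (ae_of_all _ fun ω => Real.rpow_nonneg (abs_nonneg _) _) hmom t
  have hqbound : |q| ^ (1+γ) * (ε/2) ≤ M := by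
    rcases le_or_gt 0 q with h0 | h0
    · have hsub : {ω | q < Y ω} ⊆ {ω | q ^ (1+γ) ≤ |Y ω| ^ (1+γ)} := by
        intro ω hω
        exact Real.rpow_le_rpow h0 ((le_of_lt hω).trans (le_abs_self _)) h1γ.le
      have hcompl : (μ {ω | q < Y ω}).toReal = 1 - ε/2 := by
        have : {ω | q < Y ω} = Aᶜ := by
          ext ω; simp [hAdef, not_le]
        rw [this, measure_compl hAmeas (measure_ne_top μ A), measure_univ,
          ENNReal.toReal_sub_of_le prob_le_one ENNReal.one_ne_top, ENNReal.toReal_one, hμA]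
      have h1 := markov (q ^ (1+γ))
      have h2 : q ^ (1+γ) * (1 - ε/2) ≤ q ^ (1+γ) * (μ {ω | q ^ (1+γ) ≤ |Y ω| ^ (1+γ)}).toReal := by
        apply mul_le_mul_of_nonneg_left _ (Real.rpow_nonneg h0 _)
        rw [← hcompl]
        exact ENNReal.toReal_mono (measure_ne_top μ _) (measure_mono hsub)
      have h3 : q ^ (1+γ) * (ε/2) ≤ q ^ (1+γ) * (1 - ε/2) := by
        apply mul_le_mul_of_nonneg_left _ (Real.rpow_nonneg h0 _)
        linarith
      rw [abs_of_nonneg h0]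
      linarith
    · have hsub : A ⊆ {ω | (-q) ^ (1+γ) ≤ |Y ω| ^ (1+γ)} := by
        intro ω hω
        have hω' : Y ω ≤ q := hω
        have : -q ≤ |Y ω| := le_trans (by linarith) (neg_le_abs (Y ω))
        exact Real.rpow_le_rpow (by linarith) this h1γ.le
      have h1 := markov ((-q) ^ (1+γ))
      have h2 : (-q) ^ (1+γ) * (ε/2) ≤ (-q) ^ (1+γ) * (μ {ω | (-q) ^ (1+γ) ≤ |Y ω| ^ (1+γ)}).toReal := by
        apply mul_le_mul_of_nonneg_left _ (Real.rpow_nonneg (by linarith) _)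
        rw [← hμA]
        exact ENNReal.toReal_mono (measure_ne_top μ _) (measure_mono hsub)
      rw [abs_of_neg h0]
      linarith
  -- step: |q| * (ε/2) ≤ M^(1/(1+γ)) * (ε/2)^(γ/(1+γ))
  have hqstep : |q| * (ε/2) ≤ M ^ (1/(1+γ)) * (ε/2) ^ (γ/(1+γ)) := by
    have hq1 : |q| ^ (1+γ) ≤ M / (ε/2) := by
      rw [le_div_iff₀ hεhalf]; exact hqbound
    have hq2 : |q| ≤ (M / (ε/2)) ^ (1/(1+γ)) := by
      have := Real.rpow_le_rpow (Real.rpow_nonneg (abs_nonneg q) _) hq1 (by positivity : (0:ℝ) ≤ 1/(1+γ))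
      rwa [← Real.rpow_mul (abs_nonneg q), mul_one_div, div_self h1γ.ne',
        Real.rpow_one] at this
    calc |q| * (ε/2) ≤ (M / (ε/2)) ^ (1/(1+γ)) * (ε/2) :=
          mul_le_mul_of_nonneg_right hq2 hεhalf.le
      _ = M ^ (1/(1+γ)) * (ε/2) ^ (γ/(1+γ)) := by
          rw [Real.div_rpow hM0 hεhalf.le, div_mul_eq_mul_div, mul_div_assoc]
          congr 1
          have hexp : γ/(1+γ) = 1 - 1/(1+γ) := by field_simp; ring
          rw [hexp, Real.rpow_sub hεhalf, Real.rpow_one]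
  -- Hölder : ∫_A |Y| ≤ M^(1/(1+γ)) * (ε/2)^(γ/(1+γ))
  have hne : ENNReal.ofReal (1+γ) ≠ 0 := by
    simp only [ne_eq, ENNReal.ofReal_eq_zero, not_le]; linarith
  have hmemY : MemLp Y (ENNReal.ofReal (1+γ)) μ := by
    rw [← memLp_norm_rpow_iff hYmeas.aestronglyMeasurable hne ENNReal.ofReal_ne_top,
      ENNReal.div_self hne ENNReal.ofReal_ne_top, memLp_one_iff_integrable]
    simpa [Real.norm_eq_abs, ENNReal.toReal_ofReal h1γ.le] using hmom
  have hmemabs : MemLp (fun ω => |Y ω|) (ENNReal.ofReal (1+γ)) μ := by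
    simpa [Real.norm_eq_abs] using hmemY.norm
  have hind : MemLp (A.indicator (fun _ => (1:ℝ))) (ENNReal.ofReal ((1+γ)/γ)) μ :=
    memLp_indicator_const _ hAmeas 1 (Or.inr (measure_ne_top μ A))
  have hconj : (1+γ).HolderConjugate ((1+γ)/γ) := by
    rw [Real.holderConjugate_iff]
    constructor
    · linarith
    · field_simp
  have holder := integral_mul_le_Lp_mul_Lq_of_nonneg hconj
    (ae_of_all _ fun ω => abs_nonneg (Y ω))
    (ae_of_all _ fun ω => Set.indicator_nonneg (fun _ _ => zero_le_one) ω)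
    hmemabs hind
  have hindpow : ∀ ω, (A.indicator (fun _ => (1:ℝ)) ω) ^ ((1+γ)/γ)
      = A.indicator (fun _ => (1:ℝ)) ω := by
    intro ω
    by_cases hω : ω ∈ A
    · simp [Set.indicator_of_mem hω]
    · simp [Set.indicator_of_notMem hω, Real.zero_rpow (by positivity : (1+γ)/γ ≠ 0)]
  have hindint : ∫ ω, (A.indicator (fun _ => (1:ℝ)) ω) ^ ((1+γ)/γ) ∂μ = ε/2 := by
    simp only [hindpow]
    rw [integral_indicator hAmeas]
    simp [measureReal_def, hμA]
  have hmul : ∀ ω, |Y ω| * A.indicator (fun _ => (1:ℝ)) ω = A.indicator (fun ω' => |Y ω'|) ω := by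
    intro ω
    by_cases hω : ω ∈ A
    · simp [Set.indicator_of_mem hω]
    · simp [Set.indicator_of_notMem hω]
  have holderA : ∫ ω in A, |Y ω| ∂μ ≤ M ^ (1/(1+γ)) * (ε/2) ^ (γ/(1+γ)) := by
    have h1 : ∫ ω in A, |Y ω| ∂μ = ∫ ω, |Y ω| * A.indicator (fun _ => (1:ℝ)) ω ∂μ := by
      rw [← integral_indicator hAmeas]
      exact integral_congr_ae (ae_of_all _ fun ω => (hmul ω).symm)
    rw [h1]
    refine holder.trans_eq ?_
    rw [hindint, hM]
    congr 1
    show (ε/2) ^ (1/((1+γ)/γ)) = (ε/2) ^ (γ/(1+γ))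
    rw [one_div_div]
  -- main decomposition
  have hintYq : IntegrableOn (fun ω => |Y ω - q|) A μ :=
    ((hYint.sub (integrable_const q)).abs).integrableOn
  have hintYabs : IntegrableOn (fun ω => |Y ω| + |q|) A μ :=
    (hYint.abs.add (integrable_const |q|)).integrableOn
  have hstep : ∫ ω in A, |Y ω - q| ∂μ ≤ ∫ ω in A, (|Y ω| + |q|) ∂μ := by
    refine setIntegral_mono_on hintYq hintYabs hAmeas fun ω _ => ?_
    exact (abs_sub (Y ω) q).trans (by simp)
  have hsplit : ∫ ω in A, (|Y ω| + |q|) ∂μ = (∫ ω in A, |Y ω| ∂μ) + |q| * (ε/2) := by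
    rw [integral_add hYint.abs.integrableOn (integrable_const _).integrableOn]
    congr 1
    rw [setIntegral_const, measureReal_def, hμA, smul_eq_mul, mul_comm]
  calc (∫ ω in A, |Y ω - q| ∂μ) ≤ (∫ ω in A, |Y ω| ∂μ) + |q| * (ε/2) := by
        rw [← hsplit]; exact hstep
    _ ≤ M ^ (1/(1+γ)) * (ε/2) ^ (γ/(1+γ)) + M ^ (1/(1+γ)) * (ε/2) ^ (γ/(1+γ)) :=
        add_le_add holderA hqstep
    _ = 2 * M ^ (1/(1+γ)) * (ε/2) ^ (γ/(1+γ)) := by ring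
end

section
/- Let R: ℝ^d → ℝ be λ-strongly convex and L-smooth, with minimizer θ*. Consider noisy randomized coordinate descent: θ^{(t+1)} = θ^{(t)} − β ĝ_{j_t}(θ^{(t)}) e_{j_t} with constant step β = 2/(λ+L), j_t uniform on {1,…,d}, and estimators satisfying |ĝ_j(θ) − ∂_j R(θ)| ≤ ε_j uniformly on the iterates. Then E‖θ^{(T)} − θ*‖₂ ≤ ‖θ^{(0)} − θ*‖₂ (1 − 2βλL/(d(λ+L)))^{T/2} + (√d (λ+L)/(λL)) (∑_j ε_j²)^{1/2}, where the expectation is over the coordinate sampling. (Equivalently, the L² error contracts with factor κ = (1 − 2βλL/(d(λ+L)))^{1/2} per step up to additive noise β‖ε‖₂/√d.) -/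
open Finset Function

lemma aux_sum_sqrt_le {n : ℕ} (x : Fin n → ℝ) (hx : ∀ j, 0 ≤ x j) :
    ∑ j, Real.sqrt (x j) ≤ Real.sqrt n * Real.sqrt (∑ j, x j) := by
  have h := Finset.sum_mul_sq_le_sq_mul_sq Finset.univ (fun _ : Fin n => (1:ℝ))
    (fun j => Real.sqrt (x j))
  simp only [one_mul, one_pow, Finset.sum_const, Finset.card_univ, Fintype.card_fin,
    nsmul_eq_mul, mul_one] at h
  have h2 : ∀ j : Fin n, Real.sqrt (x j) ^ 2 = x j := fun j => Real.sq_sqrt (hx j)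
  rw [Finset.sum_congr rfl (fun j _ => h2 j)] at h
  have h3 : (0:ℝ) ≤ ∑ j, Real.sqrt (x j) := Finset.sum_nonneg fun j _ => Real.sqrt_nonneg _
  have := Real.sqrt_le_sqrt h
  rwa [Real.sqrt_sq h3, Real.sqrt_mul (by positivity)] at this

lemma aux_cs_abs {n : ℕ} (u v : Fin n → ℝ) :
    |∑ j, u j * v j| ≤ Real.sqrt (∑ j, u j ^ 2) * Real.sqrt (∑ j, v j ^ 2) := by
  have h := Finset.sum_mul_sq_le_sq_mul_sq Finset.univ u v
  have := Real.sqrt_le_sqrt h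
  rwa [Real.sqrt_sq_eq_abs, Real.sqrt_mul (by positivity)] at this

lemma aux_sqrt_update_le (A b c : ℝ) (hA : 0 ≤ A) :
    Real.sqrt (A + b ^ 2) ≤ Real.sqrt (A + c ^ 2) + |b - c| := by
  have h1 : Real.sqrt (A + c ^ 2) ^ 2 = A + c ^ 2 := Real.sq_sqrt (by positivity)
  have h2 : |c| ≤ Real.sqrt (A + c ^ 2) := by
    rw [← Real.sqrt_sq_eq_abs]
    exact Real.sqrt_le_sqrt (by nlinarith)
  rw [Real.sqrt_le_iff]
  constructor
  · have := Real.sqrt_nonneg (A + c ^ 2); have := abs_nonneg (b - c); linarith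
  · have hb : |b| ≤ |c| + |b - c| := by
      calc |b| = |c + (b - c)| := by ring_nf
      _ ≤ |c| + |b - c| := abs_add_le _ _
    have hb2 : b ^ 2 ≤ (|c| + |b - c|) ^ 2 := by
      rw [← sq_abs b]; exact pow_le_pow_left₀ (abs_nonneg b) hb 2
    have := abs_nonneg (b - c)
    nlinarith [sq_abs c]

lemma aux_slice_deriv {d : ℕ} (R : (Fin d → ℝ) → ℝ) (g : Fin d → (Fin d → ℝ) → ℝ)
    (hderiv : ∀ (θ : Fin d → ℝ) (j : Fin d),
      HasDerivAt (fun h : ℝ => R (Function.update θ j h)) (g j θ) (θ j))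
    (x : Fin d → ℝ) (j : Fin d) (s : ℝ) :
    HasDerivAt (fun h : ℝ => R (Function.update x j h)) (g j (Function.update x j s)) s := by
  have h := hderiv (Function.update x j s) j
  simp only [Function.update_idem, Function.update_self] at h
  exact h

lemma aux_step1 {d : ℕ} (R : (Fin d → ℝ) → ℝ) (g : Fin d → (Fin d → ℝ) → ℝ)
    (hderiv : ∀ (θ : Fin d → ℝ) (j : Fin d),
      HasDerivAt (fun h : ℝ => R (Function.update θ j h)) (g j θ) (θ j))
    (x : Fin d → ℝ) (j : Fin d) (w c M : ℝ)
    (hM : ∀ s ∈ Set.uIcc (x j) (x j + w), |g j (Function.update x j s) - c| ≤ M) :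
    |R (Function.update x j (x j + w)) - R x - w * c| ≤ M * |w| := by
  set F : ℝ → ℝ := fun s => R (Function.update x j s) - s * c with hF
  have hder : ∀ s ∈ Set.uIcc (x j) (x j + w),
      HasDerivWithinAt F (g j (Function.update x j s) - c) (Set.uIcc (x j) (x j + w)) s := by
    intro s _
    have := ((aux_slice_deriv R g hderiv x j s).sub ((hasDerivAt_id s).mul_const c)).hasDerivWithinAt
      (s := Set.uIcc (x j) (x j + w))
    simpa [hF, Pi.sub_def] using this
  have key := Convex.norm_image_sub_le_of_norm_hasDerivWithin_le (f := F)
    (f' := fun s => g j (Function.update x j s) - c) (C := M) hder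
    (fun s hs => by simpa [Real.norm_eq_abs] using hM s hs)
    (convex_uIcc _ _) (Set.left_mem_uIcc) (Set.right_mem_uIcc)
  have : F (x j + w) - F (x j) = R (Function.update x j (x j + w)) - R x - w * c := by
    simp only [hF, Function.update_eq_self]; ring
  rw [Real.norm_eq_abs, Real.norm_eq_abs, this] at key
  simpa [abs_sub_comm] using key

lemma aux_coordLip {d : ℕ} (g : Fin d → (Fin d → ℝ) → ℝ) (Lc : ℝ)
    (hLip : ∀ θ₁ θ₂ : Fin d → ℝ,
      Real.sqrt (∑ j, (g j θ₁ - g j θ₂) ^ 2) ≤ Lc * Real.sqrt (∑ j, (θ₁ j - θ₂ j) ^ 2))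
    (j : Fin d) (θ₁ θ₂ : Fin d → ℝ) :
    |g j θ₁ - g j θ₂| ≤ Lc * Real.sqrt (∑ i, (θ₁ i - θ₂ i) ^ 2) := by
  have h1 : (g j θ₁ - g j θ₂) ^ 2 ≤ ∑ i, (g i θ₁ - g i θ₂) ^ 2 :=
    Finset.single_le_sum (f := fun i => (g i θ₁ - g i θ₂) ^ 2) (fun i _ => sq_nonneg _) (Finset.mem_univ j)
  calc |g j θ₁ - g j θ₂| = Real.sqrt ((g j θ₁ - g j θ₂) ^ 2) := (Real.sqrt_sq_eq_abs _).symm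
  _ ≤ Real.sqrt (∑ i, (g i θ₁ - g i θ₂) ^ 2) := Real.sqrt_le_sqrt h1
  _ ≤ Lc * Real.sqrt (∑ i, (θ₁ i - θ₂ i) ^ 2) := hLip θ₁ θ₂

lemma aux_taylor {d : ℕ} (R : (Fin d → ℝ) → ℝ) (g : Fin d → (Fin d → ℝ) → ℝ) (Lc : ℝ)
    (hLc : 0 ≤ Lc)
    (hderiv : ∀ (θ : Fin d → ℝ) (j : Fin d),
      HasDerivAt (fun h : ℝ => R (Function.update θ j h)) (g j θ) (θ j))
    (hLip : ∀ θ₁ θ₂ : Fin d → ℝ,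
      Real.sqrt (∑ j, (g j θ₁ - g j θ₂) ^ 2) ≤ Lc * Real.sqrt (∑ j, (θ₁ j - θ₂ j) ^ 2))
    (x w : Fin d → ℝ) :
    |R (fun i => x i + w i) - R x - ∑ j, w j * g j x|
      ≤ Lc * Real.sqrt (∑ i, w i ^ 2) * ∑ j, |w j| := by
  set W := Real.sqrt (∑ i, w i ^ 2) with hW
  have hWnn : 0 ≤ W := Real.sqrt_nonneg _
  set z : ℕ → (Fin d → ℝ) := fun k i => if (i : ℕ) < k then x i + w i else x i with hz
  have key : ∀ k, k ≤ d →
      |R (z k) - R x - ∑ j ∈ univ.filter (fun j : Fin d => (j : ℕ) < k), w j * g j x|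
        ≤ Lc * W * ∑ j ∈ univ.filter (fun j : Fin d => (j : ℕ) < k), |w j| := by
    intro k hk
    induction k with
    | zero =>
      have : z 0 = x := by funext i; simp [hz]
      simp [this]
    | succ k ih =>
      have hkd : k < d := hk
      have ihk := ih (le_of_lt hkd)
      set jk : Fin d := ⟨k, hkd⟩ with hjk
      have hjkv : (jk : ℕ) = k := rfl
      have hzk : z k jk = x jk := by simp [hz, hjkv]
      have hupd : z (k+1) = Function.update (z k) jk (z k jk + w jk) := by
        funext i
        rcases eq_or_ne i jk with h | h
        · rw [h, Function.update_self, hzk]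
          simp [hz, hjkv]
        · have hne : (i : ℕ) ≠ k := fun hh => h (Fin.ext hh)
          rw [Function.update_of_ne h]
          simp only [hz]
          by_cases hik : (i : ℕ) < k
          · simp [hik, Nat.lt_succ_of_lt hik]
          · have h2 : ¬ (i : ℕ) < k + 1 := by omega
            simp [hik, h2]
      have hMbd : ∀ s ∈ Set.uIcc (z k jk) (z k jk + w jk),
          |g jk (Function.update (z k) jk s) - g jk x| ≤ Lc * W := by
        intro s hs
        have h1 := aux_coordLip g Lc hLip jk (Function.update (z k) jk s) x
        refine h1.trans (mul_le_mul_of_nonneg_left (Real.sqrt_le_sqrt ?_) hLc)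
        apply Finset.sum_le_sum
        intro i _
        rcases eq_or_ne i jk with h | h
        · rw [h, Function.update_self]
          rw [hzk, Set.uIcc_eq_union] at hs
          rcases hs with h' | h' <;> rcases h' with ⟨h1', h2'⟩ <;> nlinarith
        · rw [Function.update_of_ne h]
          simp only [hz]
          by_cases hik : (i : ℕ) < k
          · simp [hik]
          · simp [hik, sq_nonneg]
      have hstep := aux_step1 R g hderiv (z k) jk (w jk) (g jk x) (Lc * W) hMbd
      rw [← hupd] at hstep
      have hfilter : univ.filter (fun j : Fin d => (j : ℕ) < k + 1)
          = insert jk (univ.filter (fun j : Fin d => (j : ℕ) < k)) := by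
        ext i
        simp only [mem_filter, mem_univ, true_and, mem_insert]
        constructor
        · intro h
          rcases Nat.lt_succ_iff_lt_or_eq.mp h with h | h
          · exact Or.inr h
          · exact Or.inl (Fin.ext h)
        · rintro (h | h)
          · rw [h, hjkv]; omega
          · omega
      have hnotmem : jk ∉ univ.filter (fun j : Fin d => (j : ℕ) < k) := by
        simp [hjkv]
      rw [hfilter, Finset.sum_insert hnotmem, Finset.sum_insert hnotmem]
      set S := ∑ j ∈ univ.filter (fun j : Fin d => (j : ℕ) < k), w j * g j x
      set A := ∑ j ∈ univ.filter (fun j : Fin d => (j : ℕ) < k), |w j|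
      have tri : |R (z (k+1)) - R x - (w jk * g jk x + S)|
          ≤ |R (z (k+1)) - R (z k) - w jk * g jk x| + |R (z k) - R x - S| := by
        have h := abs_add_le (R (z (k+1)) - R (z k) - w jk * g jk x) (R (z k) - R x - S)
        calc |R (z (k+1)) - R x - (w jk * g jk x + S)|
            = |(R (z (k+1)) - R (z k) - w jk * g jk x) + (R (z k) - R x - S)| := by ring_nf
          _ ≤ _ := h
      refine tri.trans ?_
      have : Lc * W * (|w jk| + A) = Lc * W * |w jk| + Lc * W * A := by ring
      rw [this]
      exact add_le_add hstep ihk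
  have hzd : z d = fun i => x i + w i := by
    funext i; simp [hz, i.2]
  have hfin : univ.filter (fun j : Fin d => (j : ℕ) < d) = univ := by
    ext i; simp [i.2]
  have := key d le_rfl
  rwa [hzd, hfin] at this

lemma aux_descent {d : ℕ} (R : (Fin d → ℝ) → ℝ) (g : Fin d → (Fin d → ℝ) → ℝ) (Lc : ℝ)
    (hLc : 0 ≤ Lc)
    (hderiv : ∀ (θ : Fin d → ℝ) (j : Fin d),
      HasDerivAt (fun h : ℝ => R (Function.update θ j h)) (g j θ) (θ j))
    (hLip : ∀ θ₁ θ₂ : Fin d → ℝ,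
      Real.sqrt (∑ j, (g j θ₁ - g j θ₂) ^ 2) ≤ Lc * Real.sqrt (∑ j, (θ₁ j - θ₂ j) ^ 2))
    (x w : Fin d → ℝ) :
    R (fun i => x i + w i) ≤ R x + (∑ j, w j * g j x) + Lc / 2 * ∑ j, w j ^ 2 := by
  set W := ∑ i, w i ^ 2 with hWdef
  have hWnn : 0 ≤ W := Finset.sum_nonneg fun i _ => sq_nonneg _
  set S := Real.sqrt W with hSdef
  have hSnn : 0 ≤ S := Real.sqrt_nonneg _
  have hS2 : S ^ 2 = W := Real.sq_sqrt hWnn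
  set A := ∑ j, |w j| with hAdef
  have hAnn : 0 ≤ A := Finset.sum_nonneg fun i _ => abs_nonneg _
  -- main bound for each n ≥ 1
  have main : ∀ n : ℕ, 1 ≤ n →
      R (fun i => x i + w i) ≤ R x + (∑ j, w j * g j x) + Lc / 2 * W
        + Lc * S * A / n := by
    intro n hn
    have hn0 : (0:ℝ) < n := by exact_mod_cast hn
    set p : ℕ → (Fin d → ℝ) := fun k i => x i + ((k : ℝ) / n) * w i with hp
    have claim : ∀ k, k ≤ n →
        R (p k) ≤ R x + ((k : ℝ) / n) * (∑ j, w j * g j x)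
          + Lc * W * ((k : ℝ) * ((k : ℝ) - 1) / 2) / n ^ 2 + Lc * S * A * k / n ^ 2 := by
      intro k hk
      induction k with
      | zero => simp [hp]
      | succ k ih =>
        have ihk := ih (Nat.le_of_succ_le hk)
        -- Taylor step from p k to p (k+1)
        have htay := aux_taylor R g Lc hLc hderiv hLip (p k) (fun i => w i / n)
        have hsum1 : ∑ i, (w i / n) ^ 2 = W / n ^ 2 := by
          rw [hWdef, Finset.sum_div]
          exact Finset.sum_congr rfl fun i _ => by ring
        have hsqrt1 : Real.sqrt (∑ i, (w i / n) ^ 2) = S / n := by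
          rw [hsum1, show W / (n:ℝ) ^ 2 = W * (1/n) ^ 2 by ring,
            Real.sqrt_mul hWnn, Real.sqrt_sq (by positivity), hSdef]
          ring
        have hsumA : ∑ j, |w j / n| = A / n := by
          rw [hAdef, Finset.sum_div]
          refine Finset.sum_congr rfl fun i _ => ?_
          rw [abs_div, abs_of_pos hn0]
        have hpk1 : (fun i => p k i + w i / n) = p (k+1) := by
          funext i; simp only [hp]; push_cast; field_simp; ring
        rw [hpk1, hsqrt1, hsumA] at htay
        -- bound the inner product at p k by the one at x
        have hdiff : |∑ j, (w j / n) * g j (p k) - (1 / n) * ∑ j, w j * g j x|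
            ≤ Lc * W * k / n ^ 2 := by
          have e1 : ∑ j, (w j / n) * g j (p k) - (1 / n) * ∑ j, w j * g j x
              = (1 / n) * ∑ j, w j * (g j (p k) - g j x) := by
            rw [Finset.mul_sum, Finset.mul_sum, ← Finset.sum_sub_distrib]
            exact Finset.sum_congr rfl fun j _ => by ring
          rw [e1, abs_mul, abs_of_pos (by positivity : (0:ℝ) < 1 / n)]
          have hcs := aux_cs_abs w (fun j => g j (p k) - g j x)
          have hlip2 : Real.sqrt (∑ j, (g j (p k) - g j x) ^ 2)
              ≤ Lc * ((k : ℝ) / n * S) := by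
            have := hLip (p k) x
            have hpx : ∑ j, (p k j - x j) ^ 2 = ((k : ℝ) / n) ^ 2 * W := by
              rw [hWdef, Finset.mul_sum]
              refine Finset.sum_congr rfl fun j _ => ?_
              simp only [hp]; ring
            rw [hpx] at this
            refine this.trans ?_
            rw [Real.sqrt_mul (by positivity), Real.sqrt_sq (by positivity), hSdef]
          have : |∑ j, w j * (g j (p k) - g j x)| ≤ S * (Lc * ((k : ℝ) / n * S)) := by
            refine hcs.trans ?_
            exact mul_le_mul_of_nonneg_left hlip2 hSnn
          calc 1 / (n:ℝ) * |∑ j, w j * (g j (p k) - g j x)|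
              ≤ 1 / (n:ℝ) * (S * (Lc * ((k : ℝ) / n * S))) := by
                exact mul_le_mul_of_nonneg_left this (by positivity)
            _ = Lc * (S ^ 2) * k / n ^ 2 := by field_simp
            _ = Lc * W * k / n ^ 2 := by rw [hS2]
        -- combine
        have h1 : R (p (k+1)) ≤ R (p k) + (1 / n) * (∑ j, w j * g j x)
            + Lc * W * k / n ^ 2 + Lc * (S / n) * (A / n) := by
          have habs1 := abs_le.mp htay
          have habs2 := abs_le.mp hdiff
          linarith [habs1.2, habs2.2]
        refine h1.trans ?_
        push_cast
        have e1 : ((k:ℝ)+1)/n * (∑ j, w j * g j x)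
            = (k:ℝ)/n * (∑ j, w j * g j x) + 1/n * (∑ j, w j * g j x) := by ring
        have e2 : Lc*W*(((k:ℝ)+1)*(((k:ℝ)+1)-1)/2)/(n:ℝ)^2
            = Lc*W*((k:ℝ)*((k:ℝ)-1)/2)/(n:ℝ)^2 + Lc*W*(k:ℝ)/(n:ℝ)^2 := by ring
        have e3 : Lc*S*A*((k:ℝ)+1)/(n:ℝ)^2
            = Lc*S*A*(k:ℝ)/(n:ℝ)^2 + Lc*(S/n)*(A/n) := by ring
        linarith [ihk]
    have := claim n le_rfl
    have hpn : p n = fun i => x i + w i := by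
      funext i; simp only [hp]; rw [div_self (ne_of_gt hn0)]; ring
    rw [hpn] at this
    refine this.trans ?_
    have h1 : (n:ℝ) / n = 1 := div_self (ne_of_gt hn0)
    rw [h1, one_mul]
    have h2 : Lc * W * ((n : ℝ) * ((n : ℝ) - 1) / 2) / n ^ 2 ≤ Lc / 2 * W := by
      rw [div_le_iff₀ (by positivity)]
      nlinarith [mul_nonneg (mul_nonneg hLc hWnn) hn0.le]
    have h3 : Lc * S * A * n / n ^ 2 = Lc * S * A / n := by field_simp
    rw [h3] at this ⊢
    linarith
  refine le_of_forall_pos_le_add ?_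
  intro ε hε
  obtain ⟨n, hn⟩ := exists_nat_gt (max 1 (Lc * S * A / ε))
  have hn1 : 1 ≤ n := by
    have : (1:ℝ) ≤ max 1 (Lc * S * A / ε) := le_max_left _ _
    exact_mod_cast (this.trans hn.le).trans (le_refl _)
  have hn0 : (0:ℝ) < n := by positivity
  have hlast : Lc * S * A / n ≤ ε := by
    have h4 : Lc * S * A / ε < n := lt_of_le_of_lt (le_max_right _ _) hn
    rw [div_le_iff₀ hn0]
    rw [div_lt_iff₀ hε] at h4
    nlinarith
  have := main n hn1
  linarith

lemma aux_smono {d : ℕ} (R : (Fin d → ℝ) → ℝ) (g : Fin d → (Fin d → ℝ) → ℝ) (lam : ℝ)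
    (hSC : ∀ θ₁ θ₂ : Fin d → ℝ,
      R θ₁ + (∑ j, g j θ₁ * (θ₂ j - θ₁ j)) + lam / 2 * ∑ j, (θ₂ j - θ₁ j) ^ 2 ≤ R θ₂)
    (θ₁ θ₂ : Fin d → ℝ) :
    lam * ∑ j, (θ₂ j - θ₁ j) ^ 2 ≤ ∑ j, (g j θ₂ - g j θ₁) * (θ₂ j - θ₁ j) := by
  have h1 := hSC θ₁ θ₂
  have h2 := hSC θ₂ θ₁
  have eA : ∑ j, (g j θ₂ - g j θ₁) * (θ₂ j - θ₁ j)
      = (∑ j, g j θ₂ * (θ₂ j - θ₁ j)) - ∑ j, g j θ₁ * (θ₂ j - θ₁ j) := by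
    rw [← Finset.sum_sub_distrib]
    exact Finset.sum_congr rfl fun j _ => by ring
  have eB : ∑ j, g j θ₂ * (θ₁ j - θ₂ j) = - ∑ j, g j θ₂ * (θ₂ j - θ₁ j) := by
    rw [← Finset.sum_neg_distrib]
    exact Finset.sum_congr rfl fun j _ => by ring
  have eC : ∑ j, (θ₁ j - θ₂ j) ^ 2 = ∑ j, (θ₂ j - θ₁ j) ^ 2 :=
    Finset.sum_congr rfl fun j _ => by ring
  rw [eB, eC] at h2
  rw [eA]
  linarith

lemma aux_lam_le_Lc {d : ℕ} (hd : 0 < d) (R : (Fin d → ℝ) → ℝ)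
    (g : Fin d → (Fin d → ℝ) → ℝ) (lam Lc : ℝ)
    (hSC : ∀ θ₁ θ₂ : Fin d → ℝ,
      R θ₁ + (∑ j, g j θ₁ * (θ₂ j - θ₁ j)) + lam / 2 * ∑ j, (θ₂ j - θ₁ j) ^ 2 ≤ R θ₂)
    (hLip : ∀ θ₁ θ₂ : Fin d → ℝ,
      Real.sqrt (∑ j, (g j θ₁ - g j θ₂) ^ 2) ≤ Lc * Real.sqrt (∑ j, (θ₁ j - θ₂ j) ^ 2)) :
    lam ≤ Lc := by
  set j0 : Fin d := ⟨0, hd⟩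
  set x : Fin d → ℝ := fun _ => 0 with hx
  set y : Fin d → ℝ := fun i => if i = j0 then 1 else 0 with hy
  have hdiff : ∀ j, y j - x j = if j = j0 then 1 else 0 := by
    intro j; simp [hx, hy]
  have hsq : ∑ j, (y j - x j) ^ 2 = 1 := by
    simp only [hdiff, apply_ite (fun t : ℝ => t ^ 2)]
    simp [Finset.sum_ite_eq']
  have hip : ∑ j, (g j y - g j x) * (y j - x j) = g j0 y - g j0 x := by
    simp only [hdiff, mul_ite, mul_one, mul_zero]
    simp [Finset.sum_ite_eq']
  have h1 := aux_smono R g lam hSC x y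
  rw [hsq, hip, mul_one] at h1
  have h2 := aux_coordLip g Lc hLip j0 y x
  have e1 : ∑ i, (y i - x i) ^ 2 = 1 := hsq
  rw [e1, Real.sqrt_one, mul_one] at h2
  have := abs_le.mp h2
  have h3 : g j0 y - g j0 x ≤ Lc := by
    have := (abs_le.mp h2).2
    rw [abs_sub_comm] at h2
    linarith [(abs_le.mp h2).2]
  linarith

lemma aux_coerc {d : ℕ} (hd : 0 < d) (R : (Fin d → ℝ) → ℝ) (g : Fin d → (Fin d → ℝ) → ℝ)
    (lam Lc : ℝ) (hlam : 0 < lam) (hLc : 0 < Lc)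
    (hderiv : ∀ (θ : Fin d → ℝ) (j : Fin d),
      HasDerivAt (fun h : ℝ => R (Function.update θ j h)) (g j θ) (θ j))
    (hSC : ∀ θ₁ θ₂ : Fin d → ℝ,
      R θ₁ + (∑ j, g j θ₁ * (θ₂ j - θ₁ j)) + lam / 2 * ∑ j, (θ₂ j - θ₁ j) ^ 2 ≤ R θ₂)
    (hLip : ∀ θ₁ θ₂ : Fin d → ℝ,
      Real.sqrt (∑ j, (g j θ₁ - g j θ₂) ^ 2) ≤ Lc * Real.sqrt (∑ j, (θ₁ j - θ₂ j) ^ 2))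
    (θstar : Fin d → ℝ) (hgrad0 : ∀ j, g j θstar = 0) (θ : Fin d → ℝ) :
    (∑ j, (g j θ) ^ 2) + lam * Lc * ∑ j, (θ j - θstar j) ^ 2
      ≤ (lam + Lc) * ∑ j, g j θ * (θ j - θstar j) := by
  have hlamLc := aux_lam_le_Lc hd R g lam Lc hSC hLip
  set Ng := ∑ j, (g j θ) ^ 2 with hNg
  set Ne := ∑ j, (θ j - θstar j) ^ 2 with hNe
  set ip := ∑ j, g j θ * (θ j - θstar j) with hip
  have hNgnn : 0 ≤ Ng := Finset.sum_nonneg fun j _ => sq_nonneg _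
  have hNenn : 0 ≤ Ne := Finset.sum_nonneg fun j _ => sq_nonneg _
  -- strong monotonicity at (θstar, θ)
  have hmono : lam * Ne ≤ ip := by
    have h := aux_smono R g lam hSC θstar θ
    have e : ∑ j, (g j θ - g j θstar) * (θ j - θstar j) = ip := by
      rw [hip]; exact Finset.sum_congr rfl fun j _ => by rw [hgrad0]; ring
    rwa [e] at h
  rcases eq_or_lt_of_le hlamLc with heq | hlt
  · -- lam = Lc case
    subst heq
    have hg : Real.sqrt Ng ≤ lam * Real.sqrt Ne := by
      have := hLip θ θstar
      have e : ∑ j, (g j θ - g j θstar) ^ 2 = Ng := by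
        rw [hNg]; exact Finset.sum_congr rfl fun j _ => by rw [hgrad0]; ring
      rwa [e] at this
    have hg2 : Ng ≤ lam ^ 2 * Ne := by
      have h1 : Real.sqrt Ng ^ 2 ≤ (lam * Real.sqrt Ne) ^ 2 := by
        apply pow_le_pow_left₀ (Real.sqrt_nonneg _) hg
      rwa [Real.sq_sqrt hNgnn, mul_pow, Real.sq_sqrt hNenn] at h1
    nlinarith [hmono, hg2]
  · -- lam < Lc case
    obtain ⟨M, hM⟩ : ∃ M : ℝ, M = Lc - lam := ⟨_, rfl⟩
    have hM0 : 0 < M := by rw [hM]; linarith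
    have hMne : M ≠ 0 := ne_of_gt hM0
    obtain ⟨P, hP⟩ : ∃ P : (Fin d → ℝ) → Fin d → ℝ,
        P = fun x j => g j x - lam * x j := ⟨_, rfl⟩
    -- convexity of φ = R - lam/2 ‖·‖²
    have conv2 : ∀ x y : Fin d → ℝ,
        (R x - lam / 2 * ∑ j, x j ^ 2) + ∑ j, P x j * (y j - x j)
          ≤ R y - lam / 2 * ∑ j, y j ^ 2 := by
      intro x y
      have h := hSC x y
      have eq1 : ∑ j, P x j * (y j - x j)
          = (∑ j, g j x * (y j - x j)) - lam * ∑ j, x j * (y j - x j) := by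
        rw [Finset.mul_sum, ← Finset.sum_sub_distrib]
        exact Finset.sum_congr rfl fun j _ => by simp only [hP]; ring
      have eq2 : ∑ j, (y j - x j) ^ 2
          = (∑ j, y j ^ 2) - (∑ j, x j ^ 2) - 2 * ∑ j, x j * (y j - x j) := by
        rw [Finset.mul_sum, ← Finset.sum_sub_distrib, ← Finset.sum_sub_distrib]
        exact Finset.sum_congr rfl fun j _ => by ring
      rw [eq2] at h
      rw [eq1]
      linarith
    -- descent for φ
    have desc2 : ∀ x y : Fin d → ℝ,
        R y - lam / 2 * ∑ j, y j ^ 2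
          ≤ (R x - lam / 2 * ∑ j, x j ^ 2) + (∑ j, P x j * (y j - x j))
            + M / 2 * ∑ j, (y j - x j) ^ 2 := by
      intro x y
      have h := aux_descent R g Lc hLc.le hderiv hLip x (fun i => y i - x i)
      have e0 : (fun i => x i + (y i - x i)) = y := by funext i; ring
      rw [e0] at h
      have eq1 : ∑ j, P x j * (y j - x j)
          = (∑ j, (y j - x j) * g j x) - lam * ∑ j, x j * (y j - x j) := by
        rw [Finset.mul_sum, ← Finset.sum_sub_distrib]
        exact Finset.sum_congr rfl fun j _ => by simp only [hP]; ring
      have eq2 : ∑ j, (y j - x j) ^ 2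
          = (∑ j, y j ^ 2) - (∑ j, x j ^ 2) - 2 * ∑ j, x j * (y j - x j) := by
        rw [Finset.mul_sum, ← Finset.sum_sub_distrib, ← Finset.sum_sub_distrib]
        exact Finset.sum_congr rfl fun j _ => by ring
      rw [eq1]
      have hMe : M / 2 * ∑ j, (y j - x j) ^ 2
          = Lc / 2 * ∑ j, (y j - x j) ^ 2 - lam / 2 * ∑ j, (y j - x j) ^ 2 := by
        rw [hM]; ring
      rw [eq2] at h
      rw [hMe, eq2]
      linarith
    -- key inequality (co-coercivity of φ)
    have key : ∀ x y : Fin d → ℝ,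
        (R x - lam / 2 * ∑ j, x j ^ 2) + (∑ j, P x j * (y j - x j))
          + (1 / (2 * M)) * ∑ j, (P y j - P x j) ^ 2
          ≤ R y - lam / 2 * ∑ j, y j ^ 2 := by
      intro x y
      set D : Fin d → ℝ := fun j => P y j - P x j with hD
      set z : Fin d → ℝ := fun j => y j - (1 / M) * D j with hz
      have c1 := conv2 x z
      have c2 := desc2 y z
      have i1 : ∑ j, P x j * (z j - x j)
          = (∑ j, P x j * (y j - x j)) - (1 / M) * ∑ j, P x j * D j := by
        rw [Finset.mul_sum, ← Finset.sum_sub_distrib]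
        exact Finset.sum_congr rfl fun j _ => by simp only [hz]; ring
      have i2 : ∑ j, P y j * (z j - y j) = -(1 / M) * ∑ j, P y j * D j := by
        calc ∑ j, P y j * (z j - y j) = ∑ j, (-(1 / M)) * (P y j * D j) :=
            Finset.sum_congr rfl fun j _ => by simp only [hz]; ring
        _ = -(1 / M) * ∑ j, P y j * D j := by rw [← Finset.mul_sum]
      have i3 : ∑ j, (z j - y j) ^ 2 = (1 / M) ^ 2 * ∑ j, D j ^ 2 := by
        rw [Finset.mul_sum]
        exact Finset.sum_congr rfl fun j _ => by simp only [hz]; ring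
      have i4 : (∑ j, P y j * D j) - ∑ j, P x j * D j = ∑ j, D j ^ 2 := by
        rw [← Finset.sum_sub_distrib]
        exact Finset.sum_congr rfl fun j _ => by simp only [hD]; ring
      rw [i1] at c1
      rw [i2, i3] at c2
      have e5 : M / 2 * ((1 / M) ^ 2 * ∑ j, D j ^ 2) = (1 / (2 * M)) * ∑ j, D j ^ 2 := by
        field_simp
      have e6 : (1 / M) * ((∑ j, P y j * D j) - ∑ j, P x j * D j)
          = 2 * ((1 / (2 * M)) * ∑ j, D j ^ 2) := by
        rw [i4]; field_simp
      rw [e5] at c2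
      have e7 : (1 / M) * (∑ j, P y j * D j) - (1 / M) * (∑ j, P x j * D j)
          = 2 * ((1 / (2 * M)) * ∑ j, D j ^ 2) := by
        rw [← mul_sub, e6]
      linarith
    -- apply at (θ, θstar) and (θstar, θ) and add
    have k1 := key θ θstar
    have k2 := key θstar θ
    have hDsym : ∑ j, (P θ j - P θstar j) ^ 2 = ∑ j, (P θstar j - P θ j) ^ 2 :=
      Finset.sum_congr rfl fun j _ => by ring
    rw [← hDsym] at k1
    -- adding gives the monotone co-coercivity
    have hadd : (1 / M) * (∑ j, (P θ j - P θstar j) ^ 2)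
        ≤ ∑ j, (P θ j - P θstar j) * (θ j - θstar j) := by
      have i5 : (∑ j, P θ j * (θstar j - θ j)) + ∑ j, P θstar j * (θ j - θstar j)
          = - ∑ j, (P θ j - P θstar j) * (θ j - θstar j) := by
        rw [← Finset.sum_neg_distrib, ← Finset.sum_add_distrib]
        exact Finset.sum_congr rfl fun j _ => by ring
      have e8 : ∀ X : ℝ, (1 / M) * X = (1 / (2*M)) * X + (1 / (2*M)) * X :=
        fun X => by ring
      rw [e8]
      linarith [k1, k2, i5]
    -- expand P and conclude
    have a1 : ∑ j, (P θ j - P θstar j) * (θ j - θstar j) = ip - lam * Ne := by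
      rw [hip, hNe, Finset.mul_sum, ← Finset.sum_sub_distrib]
      exact Finset.sum_congr rfl fun j _ => by simp only [hP]; rw [hgrad0]; ring
    have a2 : ∑ j, (P θ j - P θstar j) ^ 2 = Ng - 2 * lam * ip + lam ^ 2 * Ne := by
      rw [hNg, hip, hNe, Finset.mul_sum, Finset.mul_sum]
      rw [← Finset.sum_sub_distrib, ← Finset.sum_add_distrib]
      exact Finset.sum_congr rfl fun j _ => by simp only [hP]; rw [hgrad0]; ring
    rw [a1, a2] at hadd
    have hmul := mul_le_mul_of_nonneg_left hadd hM0.le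
    have e9 : M * ((1 / M) * (Ng - 2 * lam * ip + lam ^ 2 * Ne))
        = Ng - 2 * lam * ip + lam ^ 2 * Ne := by
      field_simp
    rw [e9] at hmul
    rw [hM] at hmul
    nlinarith [hmul]

lemma aux_sum_update {d : ℕ} (θ θstar : Fin d → ℝ) (j : Fin d) (v : ℝ) :
    ∑ i, (Function.update θ j v i - θstar i) ^ 2
      = (∑ i ∈ Finset.univ.erase j, (θ i - θstar i) ^ 2) + (v - θstar j) ^ 2 := by
  have e : (fun i => (Function.update θ j v i - θstar i) ^ 2)
      = Function.update (fun i => (θ i - θstar i) ^ 2) j ((v - θstar j) ^ 2) := by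
    funext i
    rcases eq_or_ne i j with h | h
    · rw [h]; simp
    · rw [Function.update_of_ne h, Function.update_of_ne h]
  rw [e, Finset.sum_update_of_mem (Finset.mem_univ j), Finset.sdiff_singleton_eq_erase]
  ring

lemma aux_step_bound {d : ℕ} (hd : 0 < d) (R : (Fin d → ℝ) → ℝ)
    (g : Fin d → (Fin d → ℝ) → ℝ) (lam Lc : ℝ) (hlam : 0 < lam) (hLc : 0 < Lc)
    (hderiv : ∀ (θ : Fin d → ℝ) (j : Fin d),
      HasDerivAt (fun h : ℝ => R (Function.update θ j h)) (g j θ) (θ j))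
    (hSC : ∀ θ₁ θ₂ : Fin d → ℝ,
      R θ₁ + (∑ j, g j θ₁ * (θ₂ j - θ₁ j)) + lam / 2 * ∑ j, (θ₂ j - θ₁ j) ^ 2 ≤ R θ₂)
    (hLip : ∀ θ₁ θ₂ : Fin d → ℝ,
      Real.sqrt (∑ j, (g j θ₁ - g j θ₂) ^ 2) ≤ Lc * Real.sqrt (∑ j, (θ₁ j - θ₂ j) ^ 2))
    (θstar : Fin d → ℝ) (hgrad0 : ∀ j, g j θstar = 0)
    (gh : Fin d → (Fin d → ℝ) → ℝ) (ε : Fin d → ℝ)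
    (hest : ∀ (θ : Fin d → ℝ) (j : Fin d), |gh j θ - g j θ| ≤ ε j)
    (θ : Fin d → ℝ) :
    ∑ j, Real.sqrt (∑ i,
        (Function.update θ j (θ j - (2/(lam+Lc)) * gh j θ) i - θstar i) ^ 2)
      ≤ (d : ℝ) * Real.sqrt (1 - 4*lam*Lc/((d:ℝ)*(lam+Lc)^2))
          * Real.sqrt (∑ i, (θ i - θstar i) ^ 2)
        + (2/(lam+Lc)) * ∑ j, ε j := by
  have hdR : (0:ℝ) < d := by exact_mod_cast hd
  have hd1 : (1:ℝ) ≤ d := by exact_mod_cast hd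
  have hsum : 0 < lam + Lc := by linarith
  set β : ℝ := 2/(lam+Lc) with hβ
  have hβ0 : 0 < β := by positivity
  set c0 : ℝ := 4*lam*Lc/((lam+Lc)^2) with hc0
  have hc00 : 0 < c0 := by positivity
  have hc01 : c0 ≤ 1 := by
    rw [hc0, div_le_one (by positivity)]
    nlinarith [sq_nonneg (lam - Lc)]
  set κ : ℝ := Real.sqrt (1 - c0/(d:ℝ)) with hκ
  have hbase : 0 ≤ 1 - c0/(d:ℝ) := by
    have : c0/(d:ℝ) ≤ 1 := by
      rw [div_le_one hdR]; linarith
    linarith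
  have hκ0 : 0 ≤ κ := Real.sqrt_nonneg _
  set Ne := ∑ i, (θ i - θstar i) ^ 2 with hNe
  have hNenn : 0 ≤ Ne := Finset.sum_nonneg fun i _ => sq_nonneg _
  set Ng := ∑ j, (g j θ) ^ 2 with hNg
  have hNgnn : 0 ≤ Ng := Finset.sum_nonneg fun j _ => sq_nonneg _
  set ip := ∑ j, g j θ * (θ j - θstar j) with hip
  have hεnn : ∀ j, 0 ≤ ε j := fun j => le_trans (abs_nonneg _) (hest θ j)
  -- per-coordinate: replace noisy gradient by exact one
  have hper : ∀ j : Fin d,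
      Real.sqrt (∑ i, (Function.update θ j (θ j - β * gh j θ) i - θstar i) ^ 2)
        ≤ Real.sqrt (∑ i, (Function.update θ j (θ j - β * g j θ) i - θstar i) ^ 2)
          + β * ε j := by
    intro j
    rw [aux_sum_update, aux_sum_update]
    have hA : 0 ≤ ∑ i ∈ Finset.univ.erase j, (θ i - θstar i) ^ 2 :=
      Finset.sum_nonneg fun i _ => sq_nonneg _
    have h := aux_sqrt_update_le (∑ i ∈ Finset.univ.erase j, (θ i - θstar i) ^ 2)
      (θ j - β * gh j θ - θstar j) (θ j - β * g j θ - θstar j) hA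
    refine h.trans ?_
    have e : |θ j - β * gh j θ - θstar j - (θ j - β * g j θ - θstar j)|
        = β * |gh j θ - g j θ| := by
      rw [show θ j - β * gh j θ - θstar j - (θ j - β * g j θ - θstar j)
          = -(β * (gh j θ - g j θ)) by ring, abs_neg, abs_mul, abs_of_pos hβ0]
    rw [e]
    have := mul_le_mul_of_nonneg_left (hest θ j) hβ0.le
    linarith
  -- sum over j of exact-update square norms
  have hsq : ∑ j, (∑ i, (Function.update θ j (θ j - β * g j θ) i - θstar i) ^ 2)
      = (d:ℝ) * Ne - 2*β*ip + β^2*Ng := by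
    have e1 : ∀ j : Fin d, ∑ i, (Function.update θ j (θ j - β * g j θ) i - θstar i) ^ 2
        = Ne + (-(2*β) * (g j θ * (θ j - θstar j)) + β^2 * (g j θ)^2) := by
      intro j
      rw [aux_sum_update, Finset.sum_erase_eq_sub (Finset.mem_univ j), ← hNe]
      ring
    rw [Finset.sum_congr rfl fun j _ => e1 j, Finset.sum_add_distrib,
      Finset.sum_add_distrib, ← Finset.mul_sum, ← Finset.mul_sum, ← hip, ← hNg]
    simp [Finset.card_univ, mul_comm]
    ring
  -- contraction of the average
  have hcontr : (d:ℝ) * Ne - 2*β*ip + β^2*Ng ≤ ((d:ℝ) - c0) * Ne := by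
    have hco := aux_coerc hd R g lam Lc hlam hLc hderiv hSC hLip θstar hgrad0 θ
    rw [← hNg, ← hNe, ← hip] at hco
    have h2 : β^2 = 2*β/(lam+Lc) := by rw [hβ]; field_simp
    have h3 : -2*β*ip ≤ -2*β*((Ng + lam*Lc*Ne)/(lam+Lc)) := by
      have h4 : (Ng + lam*Lc*Ne)/(lam+Lc) ≤ ip := by
        rw [div_le_iff₀ hsum]; nlinarith [hco]
      nlinarith [mul_le_mul_of_nonneg_left h4 (by positivity : (0:ℝ) ≤ 2*β)]
    have h5 : (d:ℝ) * Ne - 2*β*((Ng + lam*Lc*Ne)/(lam+Lc)) + β^2*Ng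
        = ((d:ℝ) - 2*β*lam*Lc/(lam+Lc)) * Ne + (β^2 - 2*β/(lam+Lc))*Ng := by
      field_simp
      ring
    have h6 : β^2 - 2*β/(lam+Lc) = 0 := by rw [h2]; ring
    have h7 : 2*β*lam*Lc/(lam+Lc) = c0 := by rw [hβ, hc0]; field_simp; ring
    rw [h6, h7] at h5
    linarith [h3, h5.le, h5.ge]
  -- assemble
  have hJ : ∑ j, Real.sqrt (∑ i, (Function.update θ j (θ j - β * g j θ) i - θstar i) ^ 2)
      ≤ (d:ℝ) * κ * Real.sqrt Ne := by
    have h1 := aux_sum_sqrt_le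
      (fun j => ∑ i, (Function.update θ j (θ j - β * g j θ) i - θstar i) ^ 2)
      (fun j => Finset.sum_nonneg fun i _ => sq_nonneg _)
    refine h1.trans ?_
    rw [hsq]
    have h2 : Real.sqrt ((d:ℝ) * Ne - 2*β*ip + β^2*Ng)
        ≤ Real.sqrt (((d:ℝ) - c0) * Ne) := Real.sqrt_le_sqrt hcontr
    have h3 : Real.sqrt (((d:ℝ) - c0) * Ne)
        = Real.sqrt ((d:ℝ) - c0) * Real.sqrt Ne := Real.sqrt_mul (by linarith) _
    have h4 : Real.sqrt (d:ℝ) * Real.sqrt ((d:ℝ) - c0) = (d:ℝ) * κ := by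
      rw [← Real.sqrt_mul hdR.le, hκ]
      rw [show (d:ℝ) * ((d:ℝ) - c0) = (d:ℝ)^2 * (1 - c0/(d:ℝ)) by field_simp]
      rw [Real.sqrt_mul (by positivity), Real.sqrt_sq hdR.le]
    calc Real.sqrt (d:ℝ) * Real.sqrt ((d:ℝ) * Ne - 2*β*ip + β^2*Ng)
        ≤ Real.sqrt (d:ℝ) * (Real.sqrt ((d:ℝ) - c0) * Real.sqrt Ne) := by
          rw [← h3]
          exact mul_le_mul_of_nonneg_left h2 (Real.sqrt_nonneg _)
      _ = (d:ℝ) * κ * Real.sqrt Ne := by rw [← mul_assoc, h4]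
  have hfinal : ∑ j, Real.sqrt (∑ i,
      (Function.update θ j (θ j - β * gh j θ) i - θstar i) ^ 2)
      ≤ (d:ℝ) * κ * Real.sqrt Ne + β * ∑ j, ε j := by
    calc ∑ j, Real.sqrt (∑ i, (Function.update θ j (θ j - β * gh j θ) i - θstar i) ^ 2)
        ≤ ∑ j, (Real.sqrt (∑ i, (Function.update θ j (θ j - β * g j θ) i - θstar i) ^ 2)
            + β * ε j) := Finset.sum_le_sum fun j _ => hper j
      _ = (∑ j, Real.sqrt (∑ i, (Function.update θ j (θ j - β * g j θ) i - θstar i) ^ 2))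
          + β * ∑ j, ε j := by rw [Finset.sum_add_distrib, Finset.mul_sum]
      _ ≤ (d:ℝ) * κ * Real.sqrt Ne + β * ∑ j, ε j := by linarith [hJ]
  have hc0d : c0/(d:ℝ) = 4*lam*Lc/((d:ℝ)*(lam+Lc)^2) := by
    rw [hc0]; field_simp
  rw [← hc0d]
  exact hfinal

set_option maxHeartbeats 1000000 in
/-- Parameter-error contraction for noisy randomized coordinate descent under strong convexity
and smoothness: `R : ℝ^d → ℝ` is `lam`-strongly convex and `Lc`-smooth (its gradient, with
coordinate partial derivatives `g`, is `Lc`-Lipschitz) with minimizer `θstar`.  With constant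
step `β = 2/(lam + Lc)`, uniform coordinate sampling and estimators with uniform errors
`ε j`, the expected parameter error satisfies
`E‖θ^{(T)} − θ*‖₂ ≤ ‖θ^{(0)} − θ*‖₂ (1 − 2βλL/(d(λ+L)))^{T/2}
  + √d (λ+L)/(λL) ‖ε‖₂`. -/
theorem cgd_parameter_error_contraction (d T : ℕ) (hd : 0 < d)
    (R : (Fin d → ℝ) → ℝ) (g : Fin d → (Fin d → ℝ) → ℝ)
    (lam Lc : ℝ) (hlam : 0 < lam) (hLc : 0 < Lc)
    (hderiv : ∀ (θ : Fin d → ℝ) (j : Fin d),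
      HasDerivAt (fun h : ℝ => R (Function.update θ j h)) (g j θ) (θ j))
    (hSC : ∀ θ₁ θ₂ : Fin d → ℝ,
      R θ₁ + (∑ j, g j θ₁ * (θ₂ j - θ₁ j)) + lam / 2 * ∑ j, (θ₂ j - θ₁ j) ^ 2 ≤ R θ₂)
    (hLip : ∀ θ₁ θ₂ : Fin d → ℝ,
      Real.sqrt (∑ j, (g j θ₁ - g j θ₂) ^ 2) ≤ Lc * Real.sqrt (∑ j, (θ₁ j - θ₂ j) ^ 2))
    (θstar : Fin d → ℝ) (hgrad0 : ∀ j, g j θstar = 0)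
    (gh : Fin d → (Fin d → ℝ) → ℝ) (ε : Fin d → ℝ)
    (hest : ∀ (θ : Fin d → ℝ) (j : Fin d), |gh j θ - g j θ| ≤ ε j)
    (θ0 : Fin d → ℝ)
    (θiter : (Fin T → Fin d) → ℕ → (Fin d → ℝ))
    (hinit : ∀ js, θiter js 0 = θ0)
    (hstep : ∀ (js : Fin T → Fin d) (t : Fin T),
      θiter js (t.1 + 1) = Function.update (θiter js t.1) (js t)
        (θiter js t.1 (js t) - (2 / (lam + Lc)) * gh (js t) (θiter js t.1))) :
    (1 / (d : ℝ) ^ T) * ∑ js : Fin T → Fin d,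
        Real.sqrt (∑ j, (θiter js T j - θstar j) ^ 2)
      ≤ Real.sqrt (∑ j, (θ0 j - θstar j) ^ 2)
          * (1 - 2 * (2 / (lam + Lc)) * lam * Lc / ((d : ℝ) * (lam + Lc))) ^ ((T : ℝ) / 2)
        + Real.sqrt d * (lam + Lc) / (lam * Lc) * Real.sqrt (∑ j, ε j ^ 2) := by
  have hdR : (0:ℝ) < d := by exact_mod_cast hd
  have hd1 : (1:ℝ) ≤ d := by exact_mod_cast hd
  have hsumpos : 0 < lam + Lc := by linarith
  have hεnn : ∀ j, 0 ≤ ε j := fun j => le_trans (abs_nonneg _) (hest θ0 j)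
  set κ : ℝ := Real.sqrt (1 - 4*lam*Lc/((d:ℝ)*(lam+Lc)^2)) with hκdef
  have hc01 : 4*lam*Lc/((lam+Lc)^2) ≤ 1 := by
    rw [div_le_one (by positivity)]
    nlinarith [sq_nonneg (lam - Lc)]
  have hc0d : 4*lam*Lc/((d:ℝ)*(lam+Lc)^2) ≤ 1 := by
    rw [div_le_one (by positivity)]
    have h1 : 4*lam*Lc ≤ (lam+Lc)^2 := by nlinarith [sq_nonneg (lam - Lc)]
    nlinarith [sq_nonneg (lam+Lc)]
  have hbase0 : 0 ≤ 1 - 4*lam*Lc/((d:ℝ)*(lam+Lc)^2) := by linarith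
  have hκ0 : 0 ≤ κ := Real.sqrt_nonneg _
  have hκsq : κ^2 = 1 - 4*lam*Lc/((d:ℝ)*(lam+Lc)^2) := Real.sq_sqrt hbase0
  have hκlt : κ < 1 := by
    nlinarith [hκsq, hκ0, (by positivity : (0:ℝ) < 4*lam*Lc/((d:ℝ)*(lam+Lc)^2))]
  set S0 : ℝ := Real.sqrt (∑ j, (θ0 j - θstar j) ^ 2) with hS0
  have hS0nn : 0 ≤ S0 := Real.sqrt_nonneg _
  set Sε : ℝ := ∑ j, ε j with hSε
  have hSεnn : 0 ≤ Sε := Finset.sum_nonneg fun j _ => hεnn j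
  set A : ℝ := (2/(lam+Lc)) * Sε / d with hA
  have hAnn : 0 ≤ A := by positivity
  set E : ℕ → ℝ := fun t => ∑ js : Fin T → Fin d,
    Real.sqrt (∑ j, (θiter js t j - θstar j) ^ 2) with hE
  -- θiter js t depends only on js below t
  have hcongr : ∀ t : ℕ, t ≤ T → ∀ js js' : Fin T → Fin d,
      (∀ s : Fin T, (s:ℕ) < t → js s = js' s) → θiter js t = θiter js' t := by
    intro t
    induction t with
    | zero => intro _ js js' _; rw [hinit, hinit]
    | succ t ih =>
      intro ht js js' hagree
      have htT : t < T := ht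
      have h1 := hstep js ⟨t, htT⟩
      have h2 := hstep js' ⟨t, htT⟩
      simp only [Fin.val_mk] at h1 h2
      have hiter : θiter js t = θiter js' t :=
        ih (le_of_lt htT) js js' (fun s hs => hagree s (Nat.lt_succ_of_lt hs))
      have hjs : js ⟨t, htT⟩ = js' ⟨t, htT⟩ := hagree ⟨t, htT⟩ (Nat.lt_succ_self t)
      rw [h1, h2, hiter, hjs]
  -- initial value
  have hE0 : E 0 = (d:ℝ)^T * S0 := by
    simp only [hE, hinit]
    rw [Finset.sum_const, Finset.card_univ, Fintype.card_fun, Fintype.card_fin,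
      Fintype.card_fin, nsmul_eq_mul]
    push_cast
    rw [hS0]
  -- one-step recursion
  have hrec : ∀ t : ℕ, t < T → E (t+1) ≤ κ * E t + (d:ℝ)^T * A := by
    intro t ht
    set tT : Fin T := ⟨t, ht⟩ with htT
    set f : Fin d → (Fin d → ℝ) → ℝ := fun j θ =>
      Real.sqrt (∑ i, (Function.update θ j (θ j - (2/(lam+Lc)) * gh j θ) i - θstar i) ^ 2)
      with hf
    have eE : E (t+1) = ∑ js : Fin T → Fin d, f (js tT) (θiter js t) := by
      refine Finset.sum_congr rfl fun js _ => ?_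
      have h1 := hstep js tT
      simp only [htT, Fin.val_mk] at h1
      rw [h1, hf]
    -- involution on pairs
    set σf : (Fin d × (Fin T → Fin d)) → (Fin d × (Fin T → Fin d)) :=
      fun p => (p.2 tT, Function.update p.2 tT p.1) with hσf
    have hσ : Function.Involutive σf := by
      intro p
      cases p with
      | mk j js =>
        simp only [hσf, Function.update_self, Function.update_idem, Function.update_eq_self]
    have hiterupd : ∀ (j : Fin d) (js : Fin T → Fin d),
        θiter (Function.update js tT j) t = θiter js t := by
      intro j js
      refine hcongr t (le_of_lt ht) _ _ fun s hs => ?_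
      have hne : s ≠ tT := by
        intro h
        rw [h] at hs
        simp only [htT, Fin.val_mk] at hs
        exact lt_irrefl t hs
      exact Function.update_of_ne hne _ _
    have e2 : ∑ p : Fin d × (Fin T → Fin d), f p.1 (θiter p.2 t)
        = ∑ p : Fin d × (Fin T → Fin d), f (p.2 tT) (θiter p.2 t) := by
      refine Fintype.sum_bijective σf hσ.bijective _ _ fun p => ?_
      cases p with
      | mk j js =>
        simp only [hσf, Function.update_self]
        rw [hiterupd]
    have e3 : ∑ p : Fin d × (Fin T → Fin d), f (p.2 tT) (θiter p.2 t)
        = (d:ℝ) * E (t+1) := by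
      rw [Fintype.sum_prod_type]
      dsimp only
      rw [eE, Finset.sum_const, Finset.card_univ, Fintype.card_fin, nsmul_eq_mul]
    have e4 : ∑ p : Fin d × (Fin T → Fin d), f p.1 (θiter p.2 t)
        = ∑ js : Fin T → Fin d, ∑ j : Fin d, f j (θiter js t) := by
      rw [Fintype.sum_prod_type]
      exact Finset.sum_comm
    have hstepb : ∀ js : Fin T → Fin d,
        ∑ j : Fin d, f j (θiter js t)
          ≤ (d:ℝ) * κ * Real.sqrt (∑ i, (θiter js t i - θstar i) ^ 2)
            + (2/(lam+Lc)) * Sε := by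
      intro js
      have := aux_step_bound hd R g lam Lc hlam hLc hderiv hSC hLip θstar hgrad0
        gh ε hest (θiter js t)
      rw [← hκdef] at this
      simpa [hf, hSε, mul_assoc] using this
    have hsum2 : ∑ js : Fin T → Fin d, ∑ j : Fin d, f j (θiter js t)
        ≤ (d:ℝ) * κ * E t + (d:ℝ)^T * ((2/(lam+Lc)) * Sε) := by
      calc ∑ js : Fin T → Fin d, ∑ j : Fin d, f j (θiter js t)
          ≤ ∑ js : Fin T → Fin d,
            ((d:ℝ) * κ * Real.sqrt (∑ i, (θiter js t i - θstar i) ^ 2)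
              + (2/(lam+Lc)) * Sε) := Finset.sum_le_sum fun js _ => hstepb js
        _ = (d:ℝ) * κ * E t + (d:ℝ)^T * ((2/(lam+Lc)) * Sε) := by
            rw [Finset.sum_add_distrib, ← Finset.mul_sum, Finset.sum_const,
              Finset.card_univ, Fintype.card_fun, Fintype.card_fin, Fintype.card_fin,
              nsmul_eq_mul, hE]
            push_cast
            ring
    have hd' : (d:ℝ) * E (t+1) ≤ (d:ℝ) * (κ * E t) + (d:ℝ)^T * ((2/(lam+Lc)) * Sε) := by
      rw [← e3, ← e2, e4]
      calc ∑ js : Fin T → Fin d, ∑ j : Fin d, f j (θiter js t)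
          ≤ (d:ℝ) * κ * E t + (d:ℝ)^T * ((2/(lam+Lc)) * Sε) := hsum2
        _ = (d:ℝ) * (κ * E t) + (d:ℝ)^T * ((2/(lam+Lc)) * Sε) := by ring
    have h10 : κ * E t + (d:ℝ)^T * A
        = ((d:ℝ) * (κ * E t) + (d:ℝ)^T * ((2/(lam+Lc)) * Sε)) / d := by
      rw [hA]; field_simp
    rw [h10, le_div_iff₀ hdR]
    calc E (t+1) * d = (d:ℝ) * E (t+1) := by ring
      _ ≤ _ := hd'
  -- geometric bound
  have hgeo : ∀ t : ℕ, t ≤ T →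
      E t ≤ (d:ℝ)^T * (κ^t * S0 + A * ∑ s ∈ Finset.range t, κ^s) := by
    intro t
    induction t with
    | zero =>
      intro _
      simp [hE0]
    | succ t ih =>
      intro ht
      have iht := ih (Nat.le_of_succ_le ht)
      have hr := hrec t ht
      have h1 := mul_le_mul_of_nonneg_left iht hκ0
      have h2 : κ * ((d:ℝ)^T * (κ^t * S0 + A * ∑ s ∈ Finset.range t, κ^s))
          = (d:ℝ)^T * (κ^(t+1) * S0 + A * (κ * ∑ s ∈ Finset.range t, κ^s)) := by ring
      have h3 : ∑ s ∈ Finset.range (t+1), κ^s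
          = κ * ∑ s ∈ Finset.range t, κ^s + 1 := geom_sum_succ
      calc E (t+1) ≤ κ * E t + (d:ℝ)^T * A := hr
        _ ≤ κ * ((d:ℝ)^T * (κ^t * S0 + A * ∑ s ∈ Finset.range t, κ^s)) + (d:ℝ)^T * A := by
            linarith [h1]
        _ = (d:ℝ)^T * (κ^(t+1) * S0 + A * (κ * ∑ s ∈ Finset.range t, κ^s + 1)) := by
            rw [h2]; ring
        _ = (d:ℝ)^T * (κ^(t+1) * S0 + A * ∑ s ∈ Finset.range (t+1), κ^s) := by
            rw [h3]
  have hET := hgeo T le_rfl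
  -- bound the geometric series
  have hGnn : 0 ≤ ∑ s ∈ Finset.range T, κ^s :=
    Finset.sum_nonneg fun s _ => pow_nonneg hκ0 s
  have hG : ∑ s ∈ Finset.range T, κ^s ≤ 1/(1-κ) := by
    have hmul := geom_sum_mul κ T
    have h1 : (∑ s ∈ Finset.range T, κ^s) * (1-κ) = 1 - κ^T := by
      linear_combination (-1 : ℝ) * hmul
    rw [le_div_iff₀ (by linarith)]
    rw [h1]
    have : 0 ≤ κ^T := pow_nonneg hκ0 T
    linarith
  -- bound 1/(1-κ)
  have hκub : κ ≤ 1 - (4*lam*Lc/((d:ℝ)*(lam+Lc)^2))/2 := by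
    rw [hκdef, Real.sqrt_le_iff]
    constructor
    · nlinarith [sq_nonneg (4*lam*Lc/((d:ℝ)*(lam+Lc)^2)), hc0d]
    · nlinarith [sq_nonneg (4*lam*Lc/((d:ℝ)*(lam+Lc)^2)), hc0d]
  have hgap : (4*lam*Lc/((d:ℝ)*(lam+Lc)^2))/2 ≤ 1 - κ := by linarith
  have hgap0 : (0:ℝ) < (4*lam*Lc/((d:ℝ)*(lam+Lc)^2))/2 := by positivity
  have hinv : 1/(1-κ) ≤ 1/((4*lam*Lc/((d:ℝ)*(lam+Lc)^2))/2) :=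
    one_div_le_one_div_of_le hgap0 hgap
  -- the noise term
  have hnoise : A * (1/(1-κ)) ≤ Real.sqrt d * (lam + Lc) / (lam * Lc) * Real.sqrt (∑ j, ε j ^ 2) := by
    have h1 : A * (1/(1-κ)) ≤ A * (1/((4*lam*Lc/((d:ℝ)*(lam+Lc)^2))/2)) :=
      mul_le_mul_of_nonneg_left hinv hAnn
    refine h1.trans ?_
    have h2 : A * (1/((4*lam*Lc/((d:ℝ)*(lam+Lc)^2))/2)) = (lam+Lc)/(lam*Lc) * Sε := by
      rw [hA]
      field_simp
      ring
    rw [h2]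
    have h3 : Sε ≤ Real.sqrt d * Real.sqrt (∑ j, ε j ^ 2) := by
      have h4 := aux_sum_sqrt_le (fun j => ε j ^ 2) (fun j => sq_nonneg _)
      have h5 : ∀ j : Fin d, Real.sqrt (ε j ^ 2) = ε j := fun j => by
        rw [Real.sqrt_sq_eq_abs, abs_of_nonneg (hεnn j)]
      rw [Finset.sum_congr rfl (fun j _ => h5 j)] at h4
      rw [hSε]
      exact h4
    calc (lam+Lc)/(lam*Lc) * Sε
        ≤ (lam+Lc)/(lam*Lc) * (Real.sqrt d * Real.sqrt (∑ j, ε j ^ 2)) := by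
          exact mul_le_mul_of_nonneg_left h3 (by positivity)
      _ = Real.sqrt d * (lam + Lc) / (lam * Lc) * Real.sqrt (∑ j, ε j ^ 2) := by ring
  -- the contraction factor as rpow
  have hbase_eq : 1 - 2 * (2 / (lam + Lc)) * lam * Lc / ((d : ℝ) * (lam + Lc))
      = 1 - 4*lam*Lc/((d:ℝ)*(lam+Lc)^2) := by
    field_simp
    ring
  have hrpow : (1 - 2 * (2 / (lam + Lc)) * lam * Lc / ((d : ℝ) * (lam + Lc))) ^ ((T : ℝ) / 2)
      = κ^T := by
    rw [hbase_eq]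
    rw [show ((T:ℝ)/2) = (1/2) * (T:ℝ) by ring]
    rw [Real.rpow_mul hbase0, Real.rpow_natCast]
    congr 1
    rw [hκdef, Real.sqrt_eq_rpow]
  -- conclusion
  have hgoalE : ∑ js : Fin T → Fin d,
      Real.sqrt (∑ j, (θiter js T j - θstar j) ^ 2) = E T := rfl
  rw [hgoalE]
  have hfin : (1/(d:ℝ)^T) * E T ≤ κ^T * S0 + A * (1/(1-κ)) := by
    rw [one_div, inv_mul_le_iff₀ (by positivity)]
    refine hET.trans ?_
    have h6 : A * ∑ s ∈ Finset.range T, κ^s ≤ A * (1/(1-κ)) :=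
      mul_le_mul_of_nonneg_left hG hAnn
    have h7 : (0:ℝ) ≤ (d:ℝ)^T := by positivity
    exact mul_le_mul_of_nonneg_left (by linarith [h6]) h7
  refine hfin.trans ?_
  rw [hrpow]
  have : κ^T * S0 = S0 * κ^T := by ring
  rw [this]
  exact add_le_add le_rfl hnoise
end

section
/- Let R be convex, differentiable, coordinate-wise L_j-smooth on a product domain Θ = ∏_j Θ_j with minimizer θ* of R, and run projected coordinate descent with soft-thresholded noisy gradients: θ^{(t+1)}_{j_t} = proj_{Θ_{j_t}}(θ^{(t)}_{j_t} − (1/L_{j_t}) τ_{ε_{j_t}}(ĝ_{j_t}(θ^{(t)}))), j_t uniform on {1,…,d}, where |ĝ_j(θ) − ∂_j R(θ)| ≤ ε_j for all θ ∈ Θ. Then E[R(θ^{(T)})] − R(θ*) ≤ (d/(T+1)) (∑_j (L_j/2)(θ^{(0)}_j − θ*_j)² + R(θ^{(0)}) − R(θ*)) + (2‖ε‖₂/(T+1)) ∑_{t=0}^T ‖θ^{(t)} − θ*‖₂, where the expectation is over the coordinate sampling. -/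
namespace CGDAux

/-- clamp facts -/
lemma clamp_mem {a b y : ℝ} (hab : a ≤ b) : max a (min b y) ∈ Set.Icc a b :=
  ⟨le_max_left _ _, max_le hab (min_le_left _ _)⟩

lemma clamp_eq_self {a b y : ℝ} (hy : y ∈ Set.Icc a b) : max a (min b y) = y := by
  rw [min_eq_right hy.2, max_eq_right hy.1]

lemma clamp_proj {a b y s : ℝ} (hab : a ≤ b) (hs : s ∈ Set.Icc a b) :
    (y - max a (min b y)) * (s - max a (min b y)) ≤ 0 := by
  rcases le_total y a with h | h
  · rw [min_eq_right (h.trans hab), max_eq_left h]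
    have := hs.1
    nlinarith
  · rcases le_total b y with h2 | h2
    · rw [min_eq_left h2, max_eq_right hab]
      have := hs.2
      nlinarith
    · rw [clamp_eq_self ⟨h, h2⟩]
      simp

lemma clamp_mono {a b y z : ℝ} (hyz : y ≤ z) : max a (min b y) ≤ max a (min b z) :=
  max_le_max le_rfl (min_le_min le_rfl hyz)

/-- 1-D descent lemma -/
lemma descent1d {f f' : ℝ → ℝ} {a b x y L : ℝ} (hL : 0 ≤ L)
    (hx : x ∈ Set.Icc a b) (hy : y ∈ Set.Icc a b)
    (hd : ∀ z ∈ Set.Icc a b, HasDerivAt f (f' z) z)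
    (hlip : ∀ z ∈ Set.Icc a b, |f' z - f' x| ≤ L * |z - x|) :
    f y ≤ f x + f' x * (y - x) + L / 2 * (y - x) ^ 2 := by
  set ψ : ℝ → ℝ := fun z => f x + f' x * (z - x) + L / 2 * (z - x) ^ 2 - f z with hψ
  have hψd : ∀ z ∈ Set.Icc a b, HasDerivAt ψ (f' x + L * (z - x) - f' z) z := by
    intro z hz
    have h1 : HasDerivAt (fun z : ℝ => f x + f' x * (z - x) + L / 2 * (z - x) ^ 2)
        (f' x + L * (z - x)) z := by
      have l1 : HasDerivAt (fun z : ℝ => f' x * (z - x)) (f' x * 1) z :=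
        ((hasDerivAt_id z).sub_const x).const_mul (f' x)
      have l2 : HasDerivAt (fun z : ℝ => L / 2 * (z - x) ^ 2)
          (L / 2 * (2 * (z - x) ^ 1 * 1)) z :=
        (((hasDerivAt_id z).sub_const x).pow 2).const_mul (L / 2)
      have : HasDerivAt (fun z : ℝ => f x + f' x * (z - x) + L / 2 * (z - x) ^ 2)
          (f' x * 1 + L / 2 * (2 * (z - x) ^ 1 * 1)) z := (l1.const_add (f x)).add l2
      convert this using 1
      ring
    exact h1.sub (hd z hz)
  have hψc : ContinuousOn ψ (Set.Icc a b) := fun z hz =>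
    ((hψd z hz).continuousAt).continuousWithinAt
  have hψx : ψ x = 0 := by simp [hψ]
  have key : 0 ≤ ψ y := by
    rcases le_total x y with hxy | hxy
    · have hsub : Set.Icc x y ⊆ Set.Icc a b := Set.Icc_subset_Icc hx.1 hy.2
      have hmono : MonotoneOn ψ (Set.Icc x y) := by
        apply monotoneOn_of_deriv_nonneg (convex_Icc x y) (hψc.mono hsub)
        · intro z hz
          rw [interior_Icc] at hz
          exact ((hψd z (hsub (Set.Ioo_subset_Icc_self hz))).differentiableAt).differentiableWithinAt
        · intro z hz
          rw [interior_Icc] at hz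
          have hzm := hsub (Set.Ioo_subset_Icc_self hz)
          rw [(hψd z hzm).deriv]
          have := (abs_le.1 (hlip z hzm)).2
          rw [abs_of_nonneg (by linarith [hz.1] : (0:ℝ) ≤ z - x)] at this
          linarith
      have := hmono (Set.left_mem_Icc.2 hxy) (Set.right_mem_Icc.2 hxy) hxy
      rwa [hψx] at this
    · have hsub : Set.Icc y x ⊆ Set.Icc a b := Set.Icc_subset_Icc hy.1 hx.2
      have hmono : AntitoneOn ψ (Set.Icc y x) := by
        apply antitoneOn_of_deriv_nonpos (convex_Icc y x) (hψc.mono hsub)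
        · intro z hz
          rw [interior_Icc] at hz
          exact ((hψd z (hsub (Set.Ioo_subset_Icc_self hz))).differentiableAt).differentiableWithinAt
        · intro z hz
          rw [interior_Icc] at hz
          have hzm := hsub (Set.Ioo_subset_Icc_self hz)
          rw [(hψd z hzm).deriv]
          have := (abs_le.1 (hlip z hzm)).1
          rw [abs_of_nonpos (by linarith [hz.2] : z - x ≤ 0)] at this
          linarith
      have := hmono (Set.left_mem_Icc.2 hxy) (Set.right_mem_Icc.2 hxy) hxy
      rwa [hψx] at this
  simp only [hψ] at key
  linarith

/-- soft-threshold facts: with `u = sign ĝ * max (|ĝ| - ε) 0` and `|ĝ - g| ≤ ε`. -/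
lemma soft_close {gg gh ε : ℝ} (hε : 0 ≤ ε) (hest : |gh - gg| ≤ ε) :
    |Real.sign gh * max (|gh| - ε) 0 - gg| ≤ 2 * ε := by
  rw [abs_le] at hest ⊢
  rcases lt_trichotomy gh 0 with h | h | h
  · rw [Real.sign_of_neg h, abs_of_neg h]
    rcases le_total (-gh - ε) 0 with h2 | h2
    · rw [max_eq_right h2]; constructor <;> nlinarith
    · rw [max_eq_left h2]; constructor <;> nlinarith
  · subst h
    simp only [Real.sign_zero, zero_mul, zero_sub, abs_zero, zero_sub] at *
    constructor <;> nlinarith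
  · rw [Real.sign_of_pos h, abs_of_pos h]
    rcases le_total (gh - ε) 0 with h2 | h2
    · rw [max_eq_right h2]; constructor <;> nlinarith
    · rw [max_eq_left h2]; constructor <;> nlinarith

lemma soft_pos {gg gh ε : ℝ} (hε : 0 ≤ ε) (hest : |gh - gg| ≤ ε)
    (h : 0 < Real.sign gh * max (|gh| - ε) 0) : Real.sign gh * max (|gh| - ε) 0 ≤ gg := by
  rw [abs_le] at hest
  rcases lt_trichotomy gh 0 with hs | hs | hs
  · exfalso
    rw [Real.sign_of_neg hs] at h
    nlinarith [le_max_right (|gh| - ε) 0]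
  · simp [hs] at h
  · rw [Real.sign_of_pos hs, abs_of_pos hs] at *
    rcases le_total (gh - ε) 0 with h2 | h2
    · rw [max_eq_right h2] at h; simp at h
    · rw [max_eq_left h2] at *; linarith

lemma soft_neg {gg gh ε : ℝ} (hε : 0 ≤ ε) (hest : |gh - gg| ≤ ε)
    (h : Real.sign gh * max (|gh| - ε) 0 < 0) : gg ≤ Real.sign gh * max (|gh| - ε) 0 := by
  rw [abs_le] at hest
  rcases lt_trichotomy gh 0 with hs | hs | hs
  · rw [Real.sign_of_neg hs, abs_of_neg hs] at *
    rcases le_total (-gh - ε) 0 with h2 | h2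
    · rw [max_eq_right h2] at h; simp at h
    · rw [max_eq_left h2] at *; linarith
  · simp [hs] at h
  · exfalso
    rw [Real.sign_of_pos hs] at h
    nlinarith [le_max_right (|gh| - ε) 0]

/-- value of the projected soft-thresholded coordinate update -/
noncomputable def stepv {d : ℕ} (a b : Fin d → ℝ) (gh : Fin d → (Fin d → ℝ) → ℝ) (L ε : Fin d → ℝ)
    (θ : Fin d → ℝ) (j : Fin d) : ℝ :=
  max (a j) (min (b j) (θ j - 1 / L j *
    (Real.sign (gh j θ) * max (|gh j θ| - ε j) 0)))

/-- per-coordinate step lemma: domain preservation, descent of `R`, potential decrease. -/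
lemma cgd_step {d : ℕ} (a b : Fin d → ℝ) (hab : ∀ j, a j ≤ b j)
    (R : (Fin d → ℝ) → ℝ) (g gh : Fin d → (Fin d → ℝ) → ℝ)
    (L : Fin d → ℝ) (hL : ∀ j, 0 < L j) (ε : Fin d → ℝ) (hε : ∀ j, 0 ≤ ε j)
    (hderiv : ∀ θ : Fin d → ℝ, (∀ j, θ j ∈ Set.Icc (a j) (b j)) → ∀ j : Fin d,
      HasDerivAt (fun h : ℝ => R (Function.update θ j h)) (g j θ) (θ j))
    (hsmooth : ∀ θ : Fin d → ℝ, (∀ j, θ j ∈ Set.Icc (a j) (b j)) →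
      ∀ (j : Fin d) (h : ℝ), (∀ k, Function.update θ j (θ j + h) k ∈ Set.Icc (a k) (b k)) →
      |g j (Function.update θ j (θ j + h)) - g j θ| ≤ L j * |h|)
    (θstar : Fin d → ℝ) (hθs : ∀ j, θstar j ∈ Set.Icc (a j) (b j))
    (θ : Fin d → ℝ) (hθ : ∀ j, θ j ∈ Set.Icc (a j) (b j)) (j : Fin d)
    (hestj : |gh j θ - g j θ| ≤ ε j) :
    (∀ k, Function.update θ j (stepv a b gh L ε θ j) k ∈ Set.Icc (a k) (b k)) ∧
    R (Function.update θ j (stepv a b gh L ε θ j)) ≤ R θ ∧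
    (∑ k, L k / 2 * (Function.update θ j (stepv a b gh L ε θ j) k - θstar k) ^ 2)
        + R (Function.update θ j (stepv a b gh L ε θ j))
      ≤ (∑ k, L k / 2 * (θ k - θstar k) ^ 2) + R θ
        - g j θ * (θ j - θstar j) + 2 * ε j * |θ j - θstar j| := by
  have hLpos := hL j
  set u : ℝ := Real.sign (gh j θ) * max (|gh j θ| - ε j) 0 with hu
  set x' : ℝ := stepv a b gh L ε θ j with hx'def
  have hx'clamp : x' = max (a j) (min (b j) (θ j - 1 / L j * u)) := rfl
  have hx' : x' ∈ Set.Icc (a j) (b j) := by rw [hx'clamp]; exact clamp_mem (hab j)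
  -- domain of updated point
  have hupdom : ∀ z ∈ Set.Icc (a j) (b j), ∀ k,
      Function.update θ j z k ∈ Set.Icc (a k) (b k) := by
    intro z hz k
    rcases eq_or_ne k j with rfl | hkj
    · rwa [Function.update_self]
    · rw [Function.update_of_ne hkj]; exact hθ k
  have hdom := hupdom x' hx'
  refine ⟨hdom, ?_⟩
  -- projection inequality
  have hproj : ∀ sp ∈ Set.Icc (a j) (b j), 0 ≤ (L j * (x' - θ j) + u) * (sp - x') := by
    intro sp hsp
    have h1 : (θ j - 1 / L j * u - x') * (sp - x') ≤ 0 := by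
      rw [hx'clamp]; exact clamp_proj (hab j) hsp
    have h2 : 0 ≤ L j * (((x' - θ j) + 1 / L j * u) * (sp - x')) := by nlinarith
    have hinv : L j * (1 / L j) = 1 := by field_simp
    have h3 : L j * (((x' - θ j) + 1 / L j * u) * (sp - x'))
        = (L j * (x' - θ j) + u) * (sp - x') := by
      linear_combination u * (sp - x') * hinv
    linarith [h3 ▸ h2]
  -- (A): u * δ ≤ - L δ²
  have hA : u * (x' - θ j) ≤ -(L j * (x' - θ j) ^ 2) := by
    have := hproj (θ j) (hθ j)
    nlinarith
  -- (u - g) δ ≥ 0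
  have hug : 0 ≤ (u - g j θ) * (x' - θ j) := by
    rcases lt_trichotomy u 0 with hc | hc | hc
    · have hδ : θ j ≤ x' := by
        rw [hx'clamp]
        have h1 : θ j ≤ θ j - 1 / L j * u := by
          have : 0 < 1 / L j * (-u) := mul_pos (by positivity) (neg_pos.2 hc)
          nlinarith
        calc θ j = max (a j) (min (b j) (θ j)) := (clamp_eq_self (hθ j)).symm
          _ ≤ _ := clamp_mono h1
      have hgu : g j θ ≤ u := soft_neg (hε j) hestj hc
      nlinarith
    · have hδ : x' = θ j := by
        rw [hx'clamp, hc]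
        simpa using clamp_eq_self (hθ j)
      rw [hδ]; simp
    · have hδ : x' ≤ θ j := by
        rw [hx'clamp]
        have h1 : θ j - 1 / L j * u ≤ θ j := by
          have : 0 < 1 / L j * u := mul_pos (by positivity) hc
          nlinarith
        calc max (a j) (min (b j) (θ j - 1 / L j * u)) ≤ max (a j) (min (b j) (θ j)) :=
            clamp_mono h1
          _ = θ j := clamp_eq_self (hθ j)
      have hgu : u ≤ g j θ := soft_pos (hε j) hestj hc
      nlinarith
  -- Taylor descent
  have hT : R (Function.update θ j x') ≤ R θ + g j θ * (x' - θ j) + L j / 2 * (x' - θ j) ^ 2 := by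
    have hd : ∀ z ∈ Set.Icc (a j) (b j),
        HasDerivAt (fun h : ℝ => R (Function.update θ j h)) (g j (Function.update θ j z)) z := by
      intro z hz
      have h0 := hderiv (Function.update θ j z) (hupdom z hz) j
      rw [Function.update_self] at h0
      simpa only [Function.update_idem] using h0
    have hlip : ∀ z ∈ Set.Icc (a j) (b j),
        |g j (Function.update θ j z) - g j (Function.update θ j (θ j))| ≤ L j * |z - θ j| := by
      intro z hz
      rw [Function.update_eq_self]
      have hz' : θ j + (z - θ j) = z := by ring
      have h := hsmooth θ hθ j (z - θ j) (by rw [hz']; exact hupdom z hz)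
      rwa [hz'] at h
    have := descent1d (f := fun h : ℝ => R (Function.update θ j h))
      (f' := fun z => g j (Function.update θ j z)) hLpos.le (hθ j) hx' hd hlip
    simpa [Function.update_eq_self] using this
  -- close estimate
  have hclose : |u - g j θ| ≤ 2 * ε j := soft_close (hε j) hestj
  have habs : (g j θ - u) * (θ j - θstar j) ≤ 2 * ε j * |θ j - θstar j| := by
    calc (g j θ - u) * (θ j - θstar j) ≤ |(g j θ - u) * (θ j - θstar j)| := le_abs_self _
      _ = |g j θ - u| * |θ j - θstar j| := abs_mul _ _
      _ = |u - g j θ| * |θ j - θstar j| := by rw [abs_sub_comm]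
      _ ≤ 2 * ε j * |θ j - θstar j| := by
          exact mul_le_mul_of_nonneg_right hclose (abs_nonneg _)
  -- R decreases
  have hRdec : R (Function.update θ j x') ≤ R θ := by nlinarith [sq_nonneg (x' - θ j)]
  refine ⟨hRdec, ?_⟩
  -- quadratic sum identity
  have h1 : ∀ k ∈ Finset.univ.erase j,
      L k / 2 * (Function.update θ j x' k - θstar k) ^ 2
        = L k / 2 * (θ k - θstar k) ^ 2 := fun k hk => by
    rw [Function.update_of_ne (Finset.ne_of_mem_erase hk)]
  have e1 : ∑ k, L k / 2 * (Function.update θ j x' k - θstar k) ^ 2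
      = (∑ k ∈ Finset.univ.erase j, L k / 2 * (θ k - θstar k) ^ 2)
        + L j / 2 * (x' - θstar j) ^ 2 := by
    rw [← Finset.sum_erase_add _ _ (Finset.mem_univ j), Function.update_self]
    congr 1
    exact Finset.sum_congr rfl h1
  have e2 : ∑ k, L k / 2 * (θ k - θstar k) ^ 2
      = (∑ k ∈ Finset.univ.erase j, L k / 2 * (θ k - θstar k) ^ 2)
        + L j / 2 * (θ j - θstar j) ^ 2 :=
    (Finset.sum_erase_add _ _ (Finset.mem_univ j)).symm
  have hB := hproj (θstar j) (hθs j)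
  nlinarith [hB, hug, habs, hT, e1, e2]

lemma count_aux {α : Type*} [Fintype α] [DecidableEq α] {β : Type*} [Fintype β] [DecidableEq β]
    (i : α) (F : (α → β) → ℝ) :
    ∑ p : (α → β) × β, F (Function.update p.1 i p.2)
      = (Fintype.card β : ℝ) * ∑ f : α → β, F f := by
  classical
  have hinv : Function.Involutive (fun p : (α → β) × β =>
      (Function.update p.1 i p.2, p.1 i)) := by
    rintro ⟨f, x⟩
    simp
  calc ∑ p : (α → β) × β, F (Function.update p.1 i p.2)
      = ∑ p : (α → β) × β, F p.1 :=
        Fintype.sum_equiv hinv.toPerm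
          (fun p : (α → β) × β => F (Function.update p.1 i p.2))
          (fun p : (α → β) × β => F p.1)
          (fun p => by simp [Function.Involutive.coe_toPerm])
    _ = ∑ f : α → β, ∑ _x : β, F f :=
        Fintype.sum_prod_type (fun p : (α → β) × β => F p.1)
    _ = (Fintype.card β : ℝ) * ∑ f : α → β, F f := by
        simp [Finset.sum_const, Finset.card_univ, nsmul_eq_mul, Finset.mul_sum]

end CGDAux

/-- Sublinear `O(1/T)` rate for projected coordinate descent with soft-thresholded noisy
gradients, without strong convexity.  On the product domain `Θ = ∏_j [a j, b j]`, `R` is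
convex (first-order condition w.r.t. its coordinate partial derivatives `g`), coordinate-wise
`L j`-smooth, with minimizer `θstar ∈ Θ` satisfying `g j θstar = 0`.  The update at a
uniformly sampled coordinate `j` is
`θ_j ← proj_{[a j, b j]}(θ_j − (1/L_j) τ_{ε_j}(ĝ_j(θ)))`.  Averaging over the `d^T`
equiprobable coordinate sequences,
`E[R(θ^{(T)})] − R(θ*) ≤ (d/(T+1)) (∑_j (L_j/2)(θ^{(0)}_j − θ*_j)² + R(θ^{(0)}) − R(θ*))
  + (2‖ε‖₂/(T+1)) ∑_{t=0}^T E‖θ^{(t)} − θ*‖₂`. -/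
theorem cgd_no_strong_convexity (d T : ℕ) (hd : 0 < d)
    (a b : Fin d → ℝ) (hab : ∀ j, a j ≤ b j)
    (R : (Fin d → ℝ) → ℝ) (g gh : Fin d → (Fin d → ℝ) → ℝ)
    (L : Fin d → ℝ) (hL : ∀ j, 0 < L j) (ε : Fin d → ℝ) (hε : ∀ j, 0 ≤ ε j)
    (hderiv : ∀ θ : Fin d → ℝ, (∀ j, θ j ∈ Set.Icc (a j) (b j)) → ∀ j : Fin d,
      HasDerivAt (fun h : ℝ => R (Function.update θ j h)) (g j θ) (θ j))
    (hconv : ∀ θ₁ : Fin d → ℝ, (∀ j, θ₁ j ∈ Set.Icc (a j) (b j)) →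
      ∀ θ₂ : Fin d → ℝ, (∀ j, θ₂ j ∈ Set.Icc (a j) (b j)) →
      R θ₁ + ∑ j, g j θ₁ * (θ₂ j - θ₁ j) ≤ R θ₂)
    (hsmooth : ∀ θ : Fin d → ℝ, (∀ j, θ j ∈ Set.Icc (a j) (b j)) →
      ∀ (j : Fin d) (h : ℝ), (∀ k, Function.update θ j (θ j + h) k ∈ Set.Icc (a k) (b k)) →
      |g j (Function.update θ j (θ j + h)) - g j θ| ≤ L j * |h|)
    (θstar : Fin d → ℝ) (hθs : ∀ j, θstar j ∈ Set.Icc (a j) (b j))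
    (hmin : ∀ j, g j θstar = 0)
    (hest : ∀ θ : Fin d → ℝ, (∀ j, θ j ∈ Set.Icc (a j) (b j)) →
      ∀ j, |gh j θ - g j θ| ≤ ε j)
    (θ0 : Fin d → ℝ) (hθ0 : ∀ j, θ0 j ∈ Set.Icc (a j) (b j))
    (θiter : (Fin T → Fin d) → ℕ → (Fin d → ℝ))
    (hinit : ∀ js, θiter js 0 = θ0)
    (hstep : ∀ (js : Fin T → Fin d) (t : Fin T),
      θiter js (t.1 + 1) = Function.update (θiter js t.1) (js t)
        (max (a (js t)) (min (b (js t))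
          (θiter js t.1 (js t) - (1 / L (js t)) *
            (Real.sign (gh (js t) (θiter js t.1)) *
              max (|gh (js t) (θiter js t.1)| - ε (js t)) 0))))) :
    (1 / (d : ℝ) ^ T) * (∑ js : Fin T → Fin d, R (θiter js T)) - R θstar
      ≤ (d : ℝ) / (T + 1) *
          ((∑ j, L j / 2 * (θ0 j - θstar j) ^ 2) + R θ0 - R θstar)
        + 2 * Real.sqrt (∑ j, ε j ^ 2) / (T + 1) *
          ∑ t ∈ Finset.range (T + 1), (1 / (d : ℝ) ^ T) *
            ∑ js : Fin T → Fin d, Real.sqrt (∑ j, (θiter js t j - θstar j) ^ 2) := by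
  classical
  have hd1 : (1:ℝ) ≤ (d:ℝ) := by exact_mod_cast hd
  have hNpos : (0:ℝ) < (d:ℝ) ^ T := by positivity
  have hT1 : (0:ℝ) < (T:ℝ) + 1 := by positivity
  set N : ℝ := (d:ℝ) ^ T with hN
  set nε : ℝ := Real.sqrt (∑ j, ε j ^ 2) with hnε
  have hnεnn : 0 ≤ nε := Real.sqrt_nonneg _
  have hstep' : ∀ (js : Fin T → Fin d) (t : Fin T),
      θiter js (t.1 + 1) = Function.update (θiter js t.1) (js t)
        (CGDAux.stepv a b gh L ε (θiter js t.1) (js t)) := by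
    intro js t; rw [hstep js t]; rfl
  have hkey := fun (θ : Fin d → ℝ) (hθ : ∀ j, θ j ∈ Set.Icc (a j) (b j)) (j : Fin d) =>
    CGDAux.cgd_step a b hab R g gh L hL ε hε hderiv hsmooth θstar hθs θ hθ j (hest θ hθ j)
  -- iterates stay in the domain
  have hdom : ∀ js (t : ℕ), t ≤ T → ∀ k, θiter js t k ∈ Set.Icc (a k) (b k) := by
    intro js t
    induction t with
    | zero => intro _ k; rw [hinit]; exact hθ0 k
    | succ t ih =>
      intro ht k
      have ht' : t < T := ht
      have e := hstep' js ⟨t, ht'⟩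
      rw [show ((⟨t, ht'⟩ : Fin T) : ℕ) = t from rfl] at e
      rw [e]
      exact (hkey _ (ih ht'.le) _).1 k
  -- R decreases along each path
  have hRstep : ∀ js (t : ℕ) (ht : t < T), R (θiter js (t+1)) ≤ R (θiter js t) := by
    intro js t ht
    have e := hstep' js ⟨t, ht⟩
    rw [show ((⟨t, ht⟩ : Fin T) : ℕ) = t from rfl] at e
    rw [e]
    exact (hkey _ (hdom js t ht.le) _).2.1
  have hRmono : ∀ js (m : ℕ), m ≤ T → ∀ t, t ≤ m → R (θiter js m) ≤ R (θiter js t) := by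
    intro js m
    induction m with
    | zero => intro _ t ht; rw [Nat.le_zero.1 ht]
    | succ m ih =>
      intro hm t ht
      have h1 : R (θiter js (m+1)) ≤ R (θiter js m) := hRstep js m hm
      rcases eq_or_lt_of_le ht with rfl | h
      · exact le_refl _
      · exact h1.trans (ih (Nat.le_of_succ_le hm) t (Nat.lt_succ_iff.1 h))
  -- the iterate at time t depends only on the first t coordinates of js
  have hprefix : ∀ (t : ℕ), t ≤ T → ∀ js js' : Fin T → Fin d,
      (∀ i : Fin T, i.1 < t → js i = js' i) → θiter js t = θiter js' t := by
    intro t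
    induction t with
    | zero => intro _ js js' _; rw [hinit, hinit]
    | succ t ih =>
      intro ht js js' hagree
      have ht' : t < T := ht
      have heq : θiter js t = θiter js' t :=
        ih ht'.le js js' (fun i hi => hagree i (hi.trans (Nat.lt_succ_self t)))
      have hj : js ⟨t, ht'⟩ = js' ⟨t, ht'⟩ := hagree ⟨t, ht'⟩ (Nat.lt_succ_self t)
      have e1 := hstep' js ⟨t, ht'⟩
      have e2 := hstep' js' ⟨t, ht'⟩
      rw [show ((⟨t, ht'⟩ : Fin T) : ℕ) = t from rfl] at e1 e2
      rw [e1, e2, heq, hj]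
  -- sums over coordinate sequences
  set A : ℕ → ℝ := fun t => ∑ js : Fin T → Fin d,
    ((∑ k, L k / 2 * (θiter js t k - θstar k) ^ 2) + R (θiter js t)) with hA
  set B : ℕ → ℝ := fun t => ∑ js : Fin T → Fin d, R (θiter js t) with hB
  set C : ℕ → ℝ := fun t => ∑ js : Fin T → Fin d,
    Real.sqrt (∑ j, (θiter js t j - θstar j) ^ 2) with hC
  -- pointwise sum-over-coordinates inequality
  have hstar : ∀ θ : Fin d → ℝ, (∀ j, θ j ∈ Set.Icc (a j) (b j)) →
      (∑ j : Fin d,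
        ((∑ k, L k / 2 * (Function.update θ j (CGDAux.stepv a b gh L ε θ j) k - θstar k) ^ 2)
          + R (Function.update θ j (CGDAux.stepv a b gh L ε θ j))))
      ≤ (d:ℝ) * ((∑ k, L k / 2 * (θ k - θstar k) ^ 2) + R θ)
        - (R θ - R θstar) + 2 * nε * Real.sqrt (∑ k, (θ k - θstar k) ^ 2) := by
    intro θ hθ
    have h2 := Finset.sum_le_sum (fun j (_ : j ∈ Finset.univ) => (hkey θ hθ j).2.2)
    have hsum : ∑ j : Fin d, ((∑ k, L k / 2 * (θ k - θstar k) ^ 2) + R θ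
          - g j θ * (θ j - θstar j) + 2 * ε j * |θ j - θstar j|)
        = (d:ℝ) * ((∑ k, L k / 2 * (θ k - θstar k) ^ 2) + R θ)
          - (∑ j, g j θ * (θ j - θstar j)) + 2 * ∑ j, ε j * |θ j - θstar j| := by
      rw [Finset.sum_congr rfl (fun (j : Fin d) (_ : j ∈ Finset.univ) =>
        (by ring : (∑ k, L k / 2 * (θ k - θstar k) ^ 2) + R θ
          - g j θ * (θ j - θstar j) + 2 * ε j * |θ j - θstar j|
          = ((∑ k, L k / 2 * (θ k - θstar k) ^ 2) + R θ)
            + (-(g j θ * (θ j - θstar j)) + 2 * (ε j * |θ j - θstar j|))))]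
      simp only [Finset.sum_add_distrib, Finset.sum_neg_distrib, ← Finset.mul_sum,
        Finset.sum_const, Finset.card_univ, Fintype.card_fin, nsmul_eq_mul]
      ring
    have hcvx : R θ - R θstar ≤ ∑ j, g j θ * (θ j - θstar j) := by
      have h := hconv θ hθ θstar hθs
      have e : ∑ j, g j θ * (θstar j - θ j) = -∑ j, g j θ * (θ j - θstar j) := by
        rw [← Finset.sum_neg_distrib]
        exact Finset.sum_congr rfl fun j _ => by ring
      rw [e] at h; linarith
    have hcs : ∑ j, ε j * |θ j - θstar j| ≤ nε * Real.sqrt (∑ k, (θ k - θstar k) ^ 2) := by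
      have hcs0 := Finset.sum_mul_sq_le_sq_mul_sq Finset.univ ε (fun j => |θ j - θstar j|)
      have hnn : 0 ≤ ∑ j, ε j * |θ j - θstar j| :=
        Finset.sum_nonneg fun j _ => mul_nonneg (hε j) (abs_nonneg _)
      have h3 : (∑ j, ε j * |θ j - θstar j|) ^ 2
          ≤ (∑ j, ε j ^ 2) * ∑ k, (θ k - θstar k) ^ 2 := by
        simpa [sq_abs] using hcs0
      calc ∑ j, ε j * |θ j - θstar j|
          ≤ Real.sqrt ((∑ j, ε j ^ 2) * ∑ k, (θ k - θstar k) ^ 2) :=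
            (Real.le_sqrt hnn (by positivity)).2 h3
        _ = nε * Real.sqrt (∑ k, (θ k - θstar k) ^ 2) := by
            rw [hnε]; exact Real.sqrt_mul (by positivity) _
    rw [hsum] at h2
    linarith
  -- counting over the random coordinate
  have hcount : ∀ (t : ℕ) (ht : t < T),
      (d:ℝ) * A (t+1) = ∑ js : Fin T → Fin d, ∑ j : Fin d,
        ((∑ k, L k / 2 * (Function.update (θiter js t) j
            (CGDAux.stepv a b gh L ε (θiter js t) j) k - θstar k) ^ 2)
          + R (Function.update (θiter js t) j
              (CGDAux.stepv a b gh L ε (θiter js t) j))) := by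
    intro t ht
    have hne : ∀ (i' : Fin T), i'.1 < t → i' ≠ (⟨t, ht⟩ : Fin T) := by
      intro i' hi' h
      rw [h] at hi'
      exact lt_irrefl t hi'
    have hFval : ∀ (js : Fin T → Fin d) (j : Fin d),
        (∑ k, L k / 2 * (θiter (Function.update js ⟨t, ht⟩ j) (t+1) k - θstar k) ^ 2)
          + R (θiter (Function.update js ⟨t, ht⟩ j) (t+1))
        = (∑ k, L k / 2 * (Function.update (θiter js t) j
            (CGDAux.stepv a b gh L ε (θiter js t) j) k - θstar k) ^ 2)
          + R (Function.update (θiter js t) j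
              (CGDAux.stepv a b gh L ε (θiter js t) j)) := by
      intro js j
      have hpre : θiter (Function.update js ⟨t, ht⟩ j) t = θiter js t :=
        hprefix t ht.le _ _ (fun i' hi' => Function.update_of_ne (hne i' hi') _ _)
      have e := hstep' (Function.update js ⟨t, ht⟩ j) ⟨t, ht⟩
      rw [show ((⟨t, ht⟩ : Fin T) : ℕ) = t from rfl] at e
      rw [e, hpre, Function.update_self]
    have hcnt := CGDAux.count_aux (⟨t, ht⟩ : Fin T)
      (fun js : Fin T → Fin d =>
        (∑ k, L k / 2 * (θiter js (t+1) k - θstar k) ^ 2) + R (θiter js (t+1)))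
    have hAe : A (t+1) = ∑ js : Fin T → Fin d,
        ((∑ k, L k / 2 * (θiter js (t+1) k - θstar k) ^ 2) + R (θiter js (t+1))) := by
      simp only [hA]
    rw [show ((Fintype.card (Fin d) : ℝ)) = (d:ℝ) by simp] at hcnt
    have hcnt2 : ∑ p : (Fin T → Fin d) × Fin d,
        ((∑ k, L k / 2 * (θiter (Function.update p.1 ⟨t, ht⟩ p.2) (t+1) k - θstar k) ^ 2)
          + R (θiter (Function.update p.1 ⟨t, ht⟩ p.2) (t+1)))
        = (d:ℝ) * ∑ js : Fin T → Fin d,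
            ((∑ k, L k / 2 * (θiter js (t+1) k - θstar k) ^ 2) + R (θiter js (t+1))) := hcnt
    rw [hAe, ← hcnt2, Fintype.sum_prod_type]
    exact Finset.sum_congr rfl fun js _ => Finset.sum_congr rfl fun j _ => hFval js j
  -- one-step expected decrease
  have hstepmain : ∀ (t : ℕ), t < T →
      (d:ℝ) * A (t+1) + B t ≤ (d:ℝ) * A t + N * R θstar + 2 * nε * C t := by
    intro t ht
    have h2 := Finset.sum_le_sum
      (fun (js : Fin T → Fin d) (_ : js ∈ Finset.univ) => hstar (θiter js t) (hdom js t ht.le))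
    have e : ∑ js : Fin T → Fin d,
        ((d:ℝ) * ((∑ k, L k / 2 * (θiter js t k - θstar k) ^ 2) + R (θiter js t))
          - (R (θiter js t) - R θstar)
          + 2 * nε * Real.sqrt (∑ k, (θiter js t k - θstar k) ^ 2))
        = (d:ℝ) * A t - (B t - N * R θstar) + 2 * nε * C t := by
      simp only [hA, hB, hC, Finset.sum_add_distrib, Finset.sum_sub_distrib, Finset.sum_const,
        Finset.card_univ, Fintype.card_fun, Fintype.card_fin, nsmul_eq_mul, ← Finset.mul_sum]
      rw [hN]
      push_cast
      ring
    rw [e] at h2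
    rw [hcount t ht]
    linarith
  -- telescoping
  have htel : ∀ k : ℕ, k ≤ T →
      (∑ t ∈ Finset.range k, B t) + (d:ℝ) * A k
        ≤ (d:ℝ) * A 0 + (k:ℝ) * (N * R θstar) + 2 * nε * ∑ t ∈ Finset.range k, C t := by
    intro k
    induction k with
    | zero => intro _; simp
    | succ k ih =>
      intro hk
      have h1 := hstepmain k hk
      have h2 := ih (Nat.le_of_succ_le hk)
      rw [Finset.sum_range_succ, Finset.sum_range_succ]
      have e : 2 * nε * ((∑ t ∈ Finset.range k, C t) + C k)
          = 2 * nε * (∑ t ∈ Finset.range k, C t) + 2 * nε * C k := by ring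
      rw [e]
      push_cast
      linarith
  -- A 0 in closed form
  have hA0 : A 0 = N * ((∑ k, L k / 2 * (θ0 k - θstar k) ^ 2) + R θ0) := by
    calc A 0 = ∑ _js : Fin T → Fin d, ((∑ k, L k / 2 * (θ0 k - θstar k) ^ 2) + R θ0) := by
          simp only [hA]
          exact Finset.sum_congr rfl fun js _ => by rw [hinit]
      _ = N * ((∑ k, L k / 2 * (θ0 k - θstar k) ^ 2) + R θ0) := by
          rw [Finset.sum_const, Finset.card_univ, Fintype.card_fun, Fintype.card_fin,
            Fintype.card_fin, nsmul_eq_mul, hN]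
          push_cast
          ring
  -- pointwise bounds at time T
  have hRstar : ∀ θ : Fin d → ℝ, (∀ j, θ j ∈ Set.Icc (a j) (b j)) → R θstar ≤ R θ := by
    intro θ hθ
    have h := hconv θstar hθs θ hθ
    simpa [hmin] using h
  have hBA : B T ≤ A T := by
    simp only [hA, hB]
    apply Finset.sum_le_sum
    intro js _
    have h2 : 0 ≤ ∑ k, L k / 2 * (θiter js T k - θstar k) ^ 2 :=
      Finset.sum_nonneg fun k _ => mul_nonneg (by linarith [hL k]) (sq_nonneg _)
    linarith
  have hAstar : N * R θstar ≤ A T := by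
    have h0 : N * R θstar = ∑ _js : Fin T → Fin d, R θstar := by
      rw [Finset.sum_const, Finset.card_univ, Fintype.card_fun, Fintype.card_fin,
        Fintype.card_fin, nsmul_eq_mul, hN]
      push_cast
      ring
    rw [h0]
    simp only [hA]
    apply Finset.sum_le_sum
    intro js _
    have h1 : R θstar ≤ R (θiter js T) := hRstar _ (hdom js T le_rfl)
    have h2 : 0 ≤ ∑ k, L k / 2 * (θiter js T k - θstar k) ^ 2 :=
      Finset.sum_nonneg fun k _ => mul_nonneg (by linarith [hL k]) (sq_nonneg _)
    linarith
  have hCnn : ∀ t, 0 ≤ C t := fun t => by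
    simp only [hC]
    exact Finset.sum_nonneg fun js _ => Real.sqrt_nonneg _
  have hBmono : ∀ t, t ≤ T → B T ≤ B t := fun t ht =>
    Finset.sum_le_sum fun js _ => hRmono js T le_rfl t ht
  -- the main estimate
  have K : ((T:ℝ) + 1) * (B T - N * R θstar)
      ≤ (d:ℝ) * N * ((∑ j, L j / 2 * (θ0 j - θstar j) ^ 2) + R θ0 - R θstar)
        + 2 * nε * ∑ t ∈ Finset.range (T+1), C t := by
    have h1 := htel T le_rfl
    have h2 : ∑ _t ∈ Finset.range (T+1), (B T - N * R θstar)
        ≤ ∑ t ∈ Finset.range (T+1), (B t - N * R θstar) :=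
      Finset.sum_le_sum fun t ht => by
        have := hBmono t (Nat.lt_succ_iff.1 (Finset.mem_range.1 ht))
        linarith
    rw [Finset.sum_const, Finset.card_range, nsmul_eq_mul] at h2
    push_cast at h2
    have h3 : ∑ t ∈ Finset.range (T+1), (B t - N * R θstar)
        = (∑ t ∈ Finset.range (T+1), B t) - ((T:ℝ)+1) * (N * R θstar) := by
      rw [Finset.sum_sub_distrib, Finset.sum_const, Finset.card_range, nsmul_eq_mul]
      push_cast
      ring
    have h4 : ∑ t ∈ Finset.range (T+1), B t = (∑ t ∈ Finset.range T, B t) + B T :=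
      Finset.sum_range_succ _ _
    have h5 : 2 * nε * ∑ t ∈ Finset.range (T+1), C t
        = 2 * nε * (∑ t ∈ Finset.range T, C t) + 2 * nε * C T := by
      rw [Finset.sum_range_succ]; ring
    have h6 : B T - N * R θstar ≤ (d:ℝ) * (A T - N * R θstar) := by
      nlinarith [hBA, hAstar, hd1]
    have h7 : (d:ℝ) * (A 0 - N * R θstar)
        = (d:ℝ) * N * ((∑ j, L j / 2 * (θ0 j - θstar j) ^ 2) + R θ0 - R θstar) := by
      rw [hA0]; ring
    have h8 : 0 ≤ 2 * nε * C T := mul_nonneg (by linarith) (hCnn T)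
    linarith
  -- final conversion
  have hNne : N ≠ 0 := ne_of_gt hNpos
  have hTne : ((T:ℝ) + 1) ≠ 0 := ne_of_gt hT1
  have hBg : (∑ js : Fin T → Fin d, R (θiter js T)) = B T := by simp only [hB]
  have hCg : ∀ t : ℕ, (∑ js : Fin T → Fin d,
      Real.sqrt (∑ j, (θiter js t j - θstar j) ^ 2)) = C t := fun t => by simp only [hC]
  rw [hBg]
  simp only [hCg]
  rw [← Finset.mul_sum]
  have e1 : 1 / N * B T - R θstar
      = (((T:ℝ) + 1) * (B T - N * R θstar)) / (((T:ℝ) + 1) * N) := by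
    field_simp
  have e2 : (d:ℝ) / ((T:ℝ) + 1) * ((∑ j, L j / 2 * (θ0 j - θstar j) ^ 2) + R θ0 - R θstar)
        + 2 * nε / ((T:ℝ) + 1) * (1 / N * ∑ t ∈ Finset.range (T+1), C t)
      = ((d:ℝ) * N * ((∑ j, L j / 2 * (θ0 j - θstar j) ^ 2) + R θ0 - R θstar)
          + 2 * nε * ∑ t ∈ Finset.range (T+1), C t) / (((T:ℝ) + 1) * N) := by
    field_simp
  have final := (div_le_div_iff_of_pos_right (mul_pos hT1 hNpos)).2 K
  linarith [e1, e2, final]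
end
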